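/- arXiv:2204.07639 — 7 statements merged into one kernel-verified Lean document; each statement's English description precedes it below -/
import Mathlib

section
/- Let R be a G-graded ring and S a minimal graded left ideal of R. Then the sum U of all graded left submodules of R that are isomorphic to some shift of S is a two-sided graded ideal of R. -/
open DirectSum

universe u v w

variable {G : Type u} [Group G] [DecidableEq G]
variable {R : Type v} [Ring R]

/-- `𝒜` is a `G`-grading of the ring `R`: homogeneous components are additive
subgroups, `1` is homogeneous of trivial degree, multiplication respects degrees,
and `R` is the internal direct sum of the components. -/
def IsGRing (𝒜 : G → AddSubgroup R) : Prop :=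
  (1 : R) ∈ 𝒜 1 ∧
  (∀ (g h : G) (a b : R), a ∈ 𝒜 g → b ∈ 𝒜 h → a * b ∈ 𝒜 (g * h)) ∧
  DirectSum.IsInternal 𝒜

/-- A left ideal is graded when it is spanned by its homogeneous elements. -/
def IsGradedLeftIdeal (𝒜 : G → AddSubgroup R) (I : Submodule R R) : Prop :=
  I = Submodule.span R ((I : Set R) ∩ ⋃ g, (𝒜 g : Set R))

/-- A minimal graded left ideal (a graded-simple graded left submodule of `R`). -/
def IsMinGradedLeftIdeal (𝒜 : G → AddSubgroup R) (S : Submodule R R) : Prop :=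
  IsGradedLeftIdeal 𝒜 S ∧ S ≠ ⊥ ∧
    ∀ T : Submodule R R, T ≤ S → IsGradedLeftIdeal 𝒜 T → T = ⊥ ∨ T = S

/-- A maximal graded left ideal. -/
def IsMaxGradedLeftIdeal (𝒜 : G → AddSubgroup R) (I : Submodule R R) : Prop :=
  IsGradedLeftIdeal 𝒜 I ∧ I ≠ ⊤ ∧
    ∀ J : Submodule R R, IsGradedLeftIdeal 𝒜 J → I < J → J = ⊤

/-- The graded Jacobson radical: intersection of all maximal graded left ideals. -/
def grJacobson (𝒜 : G → AddSubgroup R) : Submodule R R :=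
  sInf {I : Submodule R R | IsMaxGradedLeftIdeal 𝒜 I}

/-- Left annihilator of a subset of `R`. -/
def annLset (X : Set R) : Set R := {r : R | ∀ x ∈ X, r * x = 0}

/-- Right annihilator of a subset of `R`. -/
def annRset (X : Set R) : Set R := {r : R | ∀ x ∈ X, x * r = 0}

/-- Left annihilator of an element, as a left ideal. -/
def annLIdeal (x : R) : Submodule R R where
  carrier := {r : R | r * x = 0}
  add_mem' := by
    intro a b ha hb
    simp only [Set.mem_setOf_eq] at *
    rw [add_mul, ha, hb, add_zero]
  zero_mem' := by simp
  smul_mem' := by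
    intro c a ha
    simp only [Set.mem_setOf_eq, smul_eq_mul] at *
    rw [mul_assoc, ha, mul_zero]

/-- A left ideal is essential if it meets every nonzero left ideal nontrivially. -/
def IsEssentialLeftIdeal (I : Submodule R R) : Prop :=
  ∀ J : Submodule R R, J ≠ ⊥ → I ⊓ J ≠ ⊥

/-- Homogeneous part of degree `g` of the graded singular ideal. -/
def grSingSet (𝒜 : G → AddSubgroup R) (g : G) : Set R :=
  {x : R | x ∈ 𝒜 g ∧ IsEssentialLeftIdeal (annLIdeal x)}

/-- The graded singular ideal `Z^gr(R) = ⊕_g Z^gr(R)_g`. -/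
def grSing (𝒜 : G → AddSubgroup R) : AddSubgroup R :=
  AddSubgroup.closure (⋃ g, grSingSet 𝒜 g)

/-- `R` is graded left self-injective (graded Baer criterion): every morphism of
degree `σ` from a graded left ideal to `R` is right multiplication by an element
of degree `σ`. -/
def GrLeftSelfInjective (𝒜 : G → AddSubgroup R) : Prop :=
  ∀ I : Submodule R R, IsGradedLeftIdeal 𝒜 I → ∀ σ : G, ∀ f : I →ₗ[R] R,
    (∀ (g : G) (x : I), (x : R) ∈ 𝒜 g → f x ∈ 𝒜 (g * σ)) →
    ∃ m ∈ 𝒜 σ, ∀ x : I, f x = (x : R) * m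

/-- Ascending chain condition on graded left ideals. -/
def GrLeftNoetherian (𝒜 : G → AddSubgroup R) : Prop :=
  ∀ f : ℕ → Submodule R R, (∀ n, IsGradedLeftIdeal 𝒜 (f n)) → Monotone f →
    ∃ n, ∀ m, n ≤ m → f m = f n

/-- Descending chain condition on graded left ideals. -/
def GrLeftArtinian (𝒜 : G → AddSubgroup R) : Prop :=
  ∀ f : ℕ → Submodule R R, (∀ n, IsGradedLeftIdeal 𝒜 (f n)) → Antitone f →
    ∃ n, ∀ m, n ≤ m → f m = f n

/-- Graded von Neumann regularity. -/
def GrVNRegular (𝒜 : G → AddSubgroup R) : Prop :=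
  ∀ (g : G) (a : R), a ∈ 𝒜 g → ∃ b : R, a = a * b * a

/-- Graded semisimplicity: `R` is the sum of its minimal graded left ideals. -/
def GrSemisimple (𝒜 : G → AddSubgroup R) : Prop :=
  sSup {S : Submodule R R | IsMinGradedLeftIdeal 𝒜 S} = (⊤ : Submodule R R)

/-- `ℳ` is a `G`-grading of the left `R`-module `M`, compatible with `𝒜`. -/
def IsGModule (𝒜 : G → AddSubgroup R) {M : Type w} [AddCommGroup M] [Module R M]
    (ℳ : G → AddSubgroup M) : Prop :=
  (∀ (g h : G) (a : R) (m : M), a ∈ 𝒜 g → m ∈ ℳ h → a • m ∈ ℳ (g * h)) ∧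
  DirectSum.IsInternal ℳ

/-- A submodule is graded when it is spanned by its homogeneous elements. -/
def IsGradedSubmodule {M : Type w} [AddCommGroup M] [Module R M]
    (ℳ : G → AddSubgroup M) (N : Submodule R M) : Prop :=
  N = Submodule.span R ((N : Set M) ∩ ⋃ g, (ℳ g : Set M))

/-- `T` is isomorphic, as a graded left `R`-module, to the `σ`-shift of `S`
(an element of degree `g` is carried to an element of degree `g·σ`). -/
def IsoToShift (𝒜 : G → AddSubgroup R) (T S : Submodule R R) (σ : G) : Prop :=
  ∃ e : T ≃ₗ[R] S, ∀ (g : G) (x : T), (x : R) ∈ 𝒜 g ↔ ((e x : R) ∈ 𝒜 (g * σ))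

section Helpers

variable (𝒜 : G → AddSubgroup R) [GradedRing (fun i : Additive G => 𝒜 i.toMul)]

/-- degree-`g` component of `x`. -/
noncomputable def prj (g : G) (x : R) : R :=
  (DirectSum.decompose (fun i : Additive G => 𝒜 i.toMul) x (Additive.ofMul g) : R)

lemma prj_mem (g : G) (x : R) : prj 𝒜 g x ∈ 𝒜 g :=
  SetLike.coe_mem _

lemma prj_zero (g : G) : prj 𝒜 g (0 : R) = 0 := by
  simp [prj]

lemma prj_add (g : G) (x y : R) : prj 𝒜 g (x + y) = prj 𝒜 g x + prj 𝒜 g y := by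
  simp [prj]

lemma prj_of_mem_same {g : G} {x : R} (hx : x ∈ 𝒜 g) : prj 𝒜 g x = x :=
  DirectSum.decompose_of_mem_same (fun i : Additive G => 𝒜 i.toMul) hx

lemma prj_of_mem_ne {g h : G} {x : R} (hx : x ∈ 𝒜 g) (hne : h ≠ g) : prj 𝒜 h x = 0 :=
  DirectSum.decompose_of_mem_ne (fun i : Additive G => 𝒜 i.toMul) hx
    (fun hc => hne ((congrArg Additive.toMul hc).symm))

lemma exists_sum_prj (x : R) : ∃ s : Finset G, ∑ g ∈ s, prj 𝒜 g x = x := by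
  classical
  exact ⟨(DirectSum.decompose (fun i : Additive G => 𝒜 i.toMul) x).support,
    DirectSum.sum_support_decompose (fun i : Additive G => 𝒜 i.toMul) x⟩

lemma prj_sum (g : G) {ι : Type*} (s : Finset ι) (f : ι → R) :
    prj 𝒜 g (∑ k ∈ s, f k) = ∑ k ∈ s, prj 𝒜 g (f k) := by
  classical
  induction s using Finset.induction_on with
  | empty => simpa using prj_zero 𝒜 g
  | insert _ _ h ih => rw [Finset.sum_insert h, Finset.sum_insert h, prj_add, ih]

lemma prj_mul_right_mem {k : G} {b : R} (hb : b ∈ 𝒜 k) (h : G) (a : R) :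
    prj 𝒜 (h * k) (a * b) = prj 𝒜 h a * b :=
  DirectSum.coe_decompose_mul_add_of_right_mem (𝒜 := fun i : Additive G => 𝒜 i.toMul)
    (i := Additive.ofMul h) (j := Additive.ofMul k) hb

/-- components of `r * x` lie in `I` whenever all components of `x` do. -/
lemma prj_mul_mem (I : Submodule R R) (x r : R) (hx : ∀ k, prj 𝒜 k x ∈ I) (g : G) :
    prj 𝒜 g (r * x) ∈ I := by
  obtain ⟨s, hs⟩ := exists_sum_prj 𝒜 x
  have : r * x = ∑ k ∈ s, r * prj 𝒜 k x := by rw [← Finset.mul_sum, hs]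
  rw [this]
  rw [prj_sum]
  refine Submodule.sum_mem _ (fun k _ => ?_)
  have hk : prj 𝒜 k x ∈ 𝒜 k := prj_mem 𝒜 k x
  have : prj 𝒜 g (r * prj 𝒜 k x) = prj 𝒜 (g * k⁻¹) r * prj 𝒜 k x := by
    have := prj_mul_right_mem 𝒜 hk (g * k⁻¹) r
    rwa [inv_mul_cancel_right] at this
  rw [this]
  have := I.smul_mem (prj 𝒜 (g * k⁻¹) r) (hx k)
  simpa [smul_eq_mul] using this

lemma prj_mem_of_graded {I : Submodule R R} (hI : IsGradedLeftIdeal 𝒜 I) :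
    ∀ x ∈ I, ∀ g, prj 𝒜 g x ∈ I := by
  intro x hx g
  rw [hI] at hx
  induction hx using Submodule.span_induction generalizing g with
  | mem y hy =>
      obtain ⟨hyI, hyh⟩ := hy
      obtain ⟨_, ⟨k, rfl⟩, hk⟩ := hyh
      by_cases h : g = k
      · rw [h, prj_of_mem_same 𝒜 hk]; exact hyI
      · rw [prj_of_mem_ne 𝒜 hk h]; exact I.zero_mem
  | zero => rw [prj_zero]; exact I.zero_mem
  | add y z hy hz ihy ihz => rw [prj_add]; exact I.add_mem (ihy g) (ihz g)
  | smul r y hy ih =>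
      have : r • y = r * y := rfl
      rw [this]
      exact prj_mul_mem 𝒜 I y r (fun k => ih k) g

lemma graded_of_prj {I : Submodule R R} (h : ∀ x ∈ I, ∀ g, prj 𝒜 g x ∈ I) :
    IsGradedLeftIdeal 𝒜 I := by
  refine le_antisymm ?_ ?_
  · intro x hx
    obtain ⟨s, hs⟩ := exists_sum_prj 𝒜 x
    rw [← hs]
    refine Submodule.sum_mem _ (fun g _ => Submodule.subset_span ?_)
    exact ⟨h x hx g, Set.mem_iUnion.2 ⟨g, prj_mem 𝒜 g x⟩⟩
  · rw [Submodule.span_le]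
    exact Set.inter_subset_left

lemma sSup_graded (𝒮 : Set (Submodule R R)) (h : ∀ T ∈ 𝒮, IsGradedLeftIdeal 𝒜 T) :
    IsGradedLeftIdeal 𝒜 (sSup 𝒮) := by
  refine graded_of_prj 𝒜 ?_
  intro x hx g
  have hspan : sSup 𝒮 = Submodule.span R (⋃ T ∈ 𝒮, (T : Set R)) := by
    refine le_antisymm (sSup_le fun T hT => ?_) (Submodule.span_le.2 ?_)
    · exact le_trans (Submodule.span_eq T).symm.le
        (Submodule.span_mono (Set.subset_biUnion_of_mem hT))
    · intro y hy
      obtain ⟨U, ⟨T, rfl⟩, hU⟩ := hy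
      simp only [Set.mem_iUnion] at hU
      obtain ⟨hT, hyT⟩ := hU
      exact (le_sSup hT) hyT
  rw [hspan] at hx
  induction hx using Submodule.span_induction generalizing g with
  | mem y hy =>
      simp only [Set.mem_iUnion] at hy
      obtain ⟨T, hT, hyT⟩ := hy
      exact (le_sSup hT) (prj_mem_of_graded 𝒜 (h T hT) y hyT g)
  | zero => rw [prj_zero]; exact Submodule.zero_mem _
  | add y z hy hz ihy ihz => rw [prj_add]; exact Submodule.add_mem _ (ihy g) (ihz g)
  | smul r y hy ih =>
      have : r • y = r * y := rfl
      rw [this]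
      exact prj_mul_mem 𝒜 _ y r (fun k => ih k) g

/-- the range of a linear map defined on a graded ideal that takes homogeneous
elements to homogeneous elements is graded. -/
lemma range_graded {I : Submodule R R} (hI : IsGradedLeftIdeal 𝒜 I) (f : I →ₗ[R] R)
    (hf : ∀ (x : I) (k : G), (x : R) ∈ 𝒜 k → ∃ m, f x ∈ 𝒜 m) :
    IsGradedLeftIdeal 𝒜 (LinearMap.range f) := by
  refine le_antisymm ?_ ?_
  · rintro y ⟨x, rfl⟩
    obtain ⟨x, hx⟩ := x
    have hx' : x ∈ Submodule.span R ((I : Set R) ∩ ⋃ g, (𝒜 g : Set R)) := hI ▸ hx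
    have key : ∀ h : x ∈ I, f ⟨x, h⟩ ∈
        Submodule.span R ((LinearMap.range f : Set R) ∩ ⋃ g, (𝒜 g : Set R)) := by
      clear hx
      induction hx' using Submodule.span_induction with
      | mem y hy =>
          intro hy'
          obtain ⟨hyI, hyh⟩ := hy
          obtain ⟨_, ⟨k, rfl⟩, hk⟩ := hyh
          obtain ⟨m, hm⟩ := hf ⟨y, hy'⟩ k hk
          exact Submodule.subset_span ⟨⟨⟨y, hy'⟩, rfl⟩, Set.mem_iUnion.2 ⟨m, hm⟩⟩
      | zero =>
          intro h0
          have : (⟨0, h0⟩ : I) = 0 := by ext; rfl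
          rw [this, map_zero]; exact Submodule.zero_mem _
      | add y z hy hz ihy ihz =>
          intro hyz
          have hyI : y ∈ I := hI ▸ hy
          have hzI : z ∈ I := hI ▸ hz
          have : (⟨y + z, hyz⟩ : I) = ⟨y, hyI⟩ + ⟨z, hzI⟩ := by ext; rfl
          rw [this, map_add]
          exact Submodule.add_mem _ (ihy hyI) (ihz hzI)
      | smul r y hy ih =>
          intro hry
          have hyI : y ∈ I := hI ▸ hy
          have : (⟨r • y, hry⟩ : I) = r • (⟨y, hyI⟩ : I) := by ext; rfl
          rw [this, map_smul]
          exact Submodule.smul_mem _ r (ih hyI)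
    exact key hx
  · rw [Submodule.span_le]
    exact Set.inter_subset_left


lemma mul_mem' {k g : G} {a b : R} (ha : a ∈ 𝒜 k) (hb : b ∈ 𝒜 g) : a * b ∈ 𝒜 (k * g) :=
  SetLike.mul_mem_graded (A := fun i : Additive G => 𝒜 i.toMul)
    (i := Additive.ofMul k) (j := Additive.ofMul g) ha hb

/-- a graded module isomorphic to a shift of a graded-simple module is graded-simple. -/
lemma shift_simple (S : Submodule R R) (hS : IsMinGradedLeftIdeal 𝒜 S)
    {T : Submodule R R} {σ : G} (hTS : IsoToShift 𝒜 T S σ)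
    {K : Submodule R R} (hKT : K ≤ T) (hK : IsGradedLeftIdeal 𝒜 K) : K = ⊥ ∨ K = T := by
  obtain ⟨e, he⟩ := hTS
  let f : K →ₗ[R] R := S.subtype ∘ₗ e.toLinearMap ∘ₗ Submodule.inclusion hKT
  have hfval : ∀ x : K, f x = (e (Submodule.inclusion hKT x) : R) := fun _ => rfl
  have hincl : ∀ x : K, ((Submodule.inclusion hKT x : T) : R) = (x : R) := fun _ => rfl
  have hfS : LinearMap.range f ≤ S := by
    rintro y ⟨x, rfl⟩
    exact (e (Submodule.inclusion hKT x)).2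
  have hgr : IsGradedLeftIdeal 𝒜 (LinearMap.range f) := by
    refine range_graded 𝒜 hK f (fun x k hk => ⟨k * σ, ?_⟩)
    rw [hfval]
    exact (he k (Submodule.inclusion hKT x)).1 (by rw [hincl]; exact hk)
  rcases hS.2.2 _ hfS hgr with h0 | hSS
  · left
    rw [eq_bot_iff]
    intro x hx
    have : f ⟨x, hx⟩ ∈ LinearMap.range f := ⟨⟨x, hx⟩, rfl⟩
    rw [h0, Submodule.mem_bot] at this
    have h1 : (e (Submodule.inclusion hKT ⟨x, hx⟩) : R) = 0 := by rw [← hfval]; exact this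
    have h2 : e (Submodule.inclusion hKT ⟨x, hx⟩) = 0 := Subtype.ext h1
    have h3 : Submodule.inclusion hKT ⟨x, hx⟩ = 0 :=
      e.injective (h2.trans (map_zero e).symm)
    have : x = 0 := by
      have := congrArg (Subtype.val) h3
      simpa [hincl] using this
    simp [this]
  · right
    refine le_antisymm hKT ?_
    intro t ht
    have hmem : (e ⟨t, ht⟩ : R) ∈ LinearMap.range f := by
      rw [hSS]
      exact (e ⟨t, ht⟩).2
    obtain ⟨k, hk⟩ := hmem
    have h1 : e (Submodule.inclusion hKT k) = e ⟨t, ht⟩ := Subtype.ext (by rw [← hfval]; exact hk)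
    have h2 : Submodule.inclusion hKT k = ⟨t, ht⟩ := e.injective h1
    have : (k : R) = t := by
      have := congrArg (Subtype.val) h2
      simpa [hincl] using this
    exact this ▸ k.2

/-- key step: multiplying a module in the isotypic component by a homogeneous
element lands back in the isotypic component. -/
lemma mul_homog_mem (S : Submodule R R) (hS : IsMinGradedLeftIdeal 𝒜 S)
    {T : Submodule R R} (hTgr : IsGradedLeftIdeal 𝒜 T) {σ : G} (hTS : IsoToShift 𝒜 T S σ)
    {g : G} {r' : R} (hr' : r' ∈ 𝒜 g) {x : R} (hx : x ∈ T) :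
    x * r' ∈ sSup {T : Submodule R R | IsGradedLeftIdeal 𝒜 T ∧ ∃ σ : G, IsoToShift 𝒜 T S σ} := by
  obtain ⟨e, he⟩ := hTS
  set 𝒮 := {T : Submodule R R | IsGradedLeftIdeal 𝒜 T ∧ ∃ σ : G, IsoToShift 𝒜 T S σ} with h𝒮
  let f : T →ₗ[R] R := (LinearMap.mulRight R r').comp T.subtype
  have hfval : ∀ t : T, f t = (t : R) * r' := fun _ => rfl
  set K : Submodule R R := T ⊓ annLIdeal r' with hKdef
  have hKmem : ∀ y : R, y ∈ K ↔ y ∈ T ∧ y * r' = 0 := fun y => Iff.rfl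
  have hKgr : IsGradedLeftIdeal 𝒜 K := by
    refine graded_of_prj 𝒜 (fun y hy k => ?_)
    rw [hKmem] at hy ⊢
    refine ⟨prj_mem_of_graded 𝒜 hTgr y hy.1 k, ?_⟩
    rw [← prj_mul_right_mem 𝒜 hr' k y, hy.2, prj_zero]
  have hKT : K ≤ T := inf_le_left
  rcases shift_simple 𝒜 S hS ⟨e, he⟩ hKT hKgr with hKbot | hKTeq
  · -- f is injective
    have hinj : Function.Injective f := by
      rw [← LinearMap.ker_eq_bot, eq_bot_iff]
      intro t ht
      have h1 : (t : R) ∈ K := by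
        rw [hKmem]
        exact ⟨t.2, by rw [← hfval]; exact ht⟩
      rw [hKbot, Submodule.mem_bot] at h1
      simpa [Submodule.mem_bot] using Subtype.ext h1
    set Tr := LinearMap.range f with hTr
    have hTrgr : IsGradedLeftIdeal 𝒜 Tr :=
      range_graded 𝒜 hTgr f (fun t k hk => ⟨k * g, by rw [hfval]; exact mul_mem' 𝒜 hk hr'⟩)
    let e' : Tr ≃ₗ[R] S := (LinearEquiv.ofInjective f hinj).symm.trans e
    have he' : ∀ (h : G) (y : Tr), (y : R) ∈ 𝒜 h ↔ ((e' y : R) ∈ 𝒜 (h * (g⁻¹ * σ))) := by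
      intro h y
      set t : T := (LinearEquiv.ofInjective f hinj).symm y with hts
      have hyt : (y : R) = (t : R) * r' := by
        have h1 : (LinearEquiv.ofInjective f hinj) t = y :=
          LinearEquiv.apply_symm_apply _ _
        have h2 := congrArg (Subtype.val) h1
        rw [LinearEquiv.ofInjective_apply] at h2
        rw [← h2, hfval]
      have he'y : (e' y : R) = (e t : R) := rfl
      constructor
      · intro hyh
        have ht : (t : R) ∈ 𝒜 (h * g⁻¹) := by
          obtain ⟨s, hs⟩ := exists_sum_prj 𝒜 (t : R)
          rw [← hs]
          refine AddSubgroup.sum_mem _ (fun k _ => ?_)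
          by_cases hkh : k = h * g⁻¹
          · rw [hkh]; exact prj_mem 𝒜 _ _
          · have h1 : prj 𝒜 (k * g) ((t : R) * r') = prj 𝒜 k (t : R) * r' :=
              prj_mul_right_mem 𝒜 hr' k (t : R)
            have h2 : prj 𝒜 (k * g) (y : R) = 0 := by
              refine prj_of_mem_ne 𝒜 hyh (fun hc => hkh ?_)
              rw [← hc, mul_inv_cancel_right]
            rw [hyt, h1] at h2
            have h3 : prj 𝒜 k (t : R) ∈ K := by
              rw [hKmem]
              exact ⟨prj_mem_of_graded 𝒜 hTgr _ t.2 k, h2⟩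
            rw [hKbot, Submodule.mem_bot] at h3
            rw [h3]
            exact AddSubgroup.zero_mem _
        have := (he (h * g⁻¹) t).1 ht
        rw [he'y]
        rw [← mul_assoc]
        exact this
      · intro hey
        rw [he'y, ← mul_assoc] at hey
        have ht : (t : R) ∈ 𝒜 (h * g⁻¹) := (he (h * g⁻¹) t).2 hey
        have : (t : R) * r' ∈ 𝒜 (h * g⁻¹ * g) := mul_mem' 𝒜 ht hr'
        rw [inv_mul_cancel_right] at this
        rw [hyt]
        exact this
    have hTrmem : Tr ∈ 𝒮 := ⟨hTrgr, g⁻¹ * σ, e', he'⟩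
    have : x * r' ∈ Tr := ⟨⟨x, hx⟩, rfl⟩
    exact (le_sSup hTrmem) this
  · -- T * r' = 0
    have : x ∈ K := by rw [hKTeq]; exact hx
    rw [hKmem] at this
    rw [this.2]
    exact Submodule.zero_mem _

end Helpers

/-- the sum of all graded left submodules of `R` isomorphic to some
shift of a minimal graded left ideal `S` is a two-sided graded ideal of `R`. -/
theorem isoshift_component_is_graded_twosided_ideal
    (𝒜 : G → AddSubgroup R) (h𝒜 : IsGRing 𝒜)
    (S : Submodule R R) (hS : IsMinGradedLeftIdeal 𝒜 S) :
    IsGradedLeftIdeal 𝒜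
        (sSup {T : Submodule R R | IsGradedLeftIdeal 𝒜 T ∧ ∃ σ : G, IsoToShift 𝒜 T S σ}) ∧
    ∀ x ∈ sSup {T : Submodule R R | IsGradedLeftIdeal 𝒜 T ∧ ∃ σ : G, IsoToShift 𝒜 T S σ},
      ∀ r : R,
        x * r ∈ sSup {T : Submodule R R | IsGradedLeftIdeal 𝒜 T ∧ ∃ σ : G, IsoToShift 𝒜 T S σ} := by
  letI : DecidableEq (Additive G) := inferInstance
  haveI : SetLike.GradedMonoid (fun i : Additive G => 𝒜 i.toMul) :=
    { one_mem := h𝒜.1, mul_mem := fun {i j} a b ha hb => h𝒜.2.1 _ _ a b ha hb }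
  have hint : DirectSum.IsInternal (fun i : Additive G => 𝒜 i.toMul) := h𝒜.2.2
  haveI : DirectSum.Decomposition (fun i : Additive G => 𝒜 i.toMul) :=
    hint.chooseDecomposition
  haveI : GradedRing (fun i : Additive G => 𝒜 i.toMul) := {}
  set 𝒮 := {T : Submodule R R | IsGradedLeftIdeal 𝒜 T ∧ ∃ σ : G, IsoToShift 𝒜 T S σ} with h𝒮
  constructor
  · exact sSup_graded 𝒜 𝒮 (fun T hT => hT.1)
  · set U := sSup 𝒮 with hU
    let V : Submodule R R :=
      { carrier := {x : R | ∀ r : R, x * r ∈ U}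
        add_mem' := by
          intro a b ha hb r
          rw [add_mul]
          exact U.add_mem (ha r) (hb r)
        zero_mem' := by
          intro r
          rw [zero_mul]
          exact U.zero_mem
        smul_mem' := by
          intro c a ha r
          have : (c • a) * r = c • (a * r) := by
            simp [smul_eq_mul, mul_assoc]
          rw [this]
          exact U.smul_mem c (ha r) }
    have hTV : ∀ T ∈ 𝒮, T ≤ V := by
      intro T hT x hx r
      obtain ⟨s, hs⟩ := exists_sum_prj 𝒜 r
      have : x * r = ∑ g ∈ s, x * prj 𝒜 g r := by rw [← Finset.mul_sum, hs]
      rw [this]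
      refine U.sum_mem (fun g _ => ?_)
      obtain ⟨σ, hTS⟩ := hT.2
      exact mul_homog_mem 𝒜 S hS hT.1 hTS (prj_mem 𝒜 g r) hx
    have hUV : U ≤ V := sSup_le hTV
    intro x hx r
    exact hUV hx r
end

section
/- With A = M_n(Δ)(g_1,…,g_n) as above, for τ ∈ G one has Σ_1(τ) ≅ Σ_1 as graded left A-modules if and only if τ ∈ g_1^{-1}·supp(Δ)·g_1, where supp(Δ) = {σ ∈ G : Δ_σ ≠ 0}. -/
open DirectSum

universe u v w

variable {G : Type u} [Group G] [DecidableEq G]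
variable {R : Type v} [Ring R]

/-- `𝒟` makes `Δ` a `G`-graded division ring. -/
def IsGDivisionRing {Δ : Type*} [Ring Δ] (𝒟 : G → AddSubgroup Δ) : Prop :=
  IsGRing 𝒟 ∧ ∀ (g : G) (a : Δ), a ∈ 𝒟 g → a ≠ 0 → IsUnit a

/-- `Σ_1(τ₁) ≅ Σ_1(τ₂)` as graded left `A`-modules, for
`A = M_n(Δ)(g_1,…,g_n)` acting by `mulVec` on columns: an additive bijection
commuting with the `A`-action and carrying the degree-`σ` component of
`Σ_1(τ₁)` onto that of `Σ_1(τ₂)`, for every `σ`. -/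
def ShiftIsoRel {Δ : Type*} [Ring Δ] (𝒟 : G → AddSubgroup Δ) (n : ℕ)
    (gv : Fin n → G) (i0 : Fin n) (τ₁ τ₂ : G) : Prop :=
  ∃ e : (Fin n → Δ) ≃+ (Fin n → Δ),
    (∀ (a : Matrix (Fin n) (Fin n) Δ) (z : Fin n → Δ), e (a.mulVec z) = a.mulVec (e z)) ∧
    (∀ (σ : G) (z : Fin n → Δ),
      (∀ i, z i ∈ 𝒟 (gv i * (σ * τ₁) * (gv i0)⁻¹)) ↔
      (∀ i, e z i ∈ 𝒟 (gv i * (σ * τ₂) * (gv i0)⁻¹)))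

lemma hom_inv_test {Δ : Type*} [Ring Δ] [Nontrivial Δ] (𝒟 : G → AddSubgroup Δ)
    (hinternal : DirectSum.IsInternal 𝒟) (h1 : (1:Δ) ∈ 𝒟 1)
    (hmul : ∀ (g h : G) (a b : Δ), a ∈ 𝒟 g → b ∈ 𝒟 h → a * b ∈ 𝒟 (g * h))
    (h : G) (d : Δ) (hd : d ∈ 𝒟 h) (u : Δˣ) (hu : (u : Δ) = d) :
    ∃ x ∈ 𝒟 h⁻¹, x * d = 1 ∧ d * x = 1 := by
  classical
  set D : Δ ≃+ ⨁ g, 𝒟 g := (AddEquiv.ofBijective (DirectSum.coeAddMonoidHom 𝒟) hinternal).symm with hD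
  have hDof : ∀ (k : G) (y : Δ) (hy : y ∈ 𝒟 k), D y = DirectSum.of (fun g => 𝒟 g) k ⟨y, hy⟩ := by
    intro k y hy
    apply (AddEquiv.ofBijective (DirectSum.coeAddMonoidHom 𝒟) hinternal).injective
    simp [hD, DirectSum.coeAddMonoidHom_of]
    exact (DirectSum.coeAddMonoidHom_of (fun g => 𝒟 g) k ⟨y, hy⟩).symm
  set π1 : Δ →+ Δ := ((𝒟 (1:G)).subtype).comp ((DFinsupp.evalAddMonoidHom (1:G)).comp D.toAddMonoidHom) with hπ1
  have hπ1hom : ∀ (k : G) (y : Δ), y ∈ 𝒟 k → π1 y = if k = 1 then y else 0 := by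
    intro k y hy
    have hrfl : π1 y = ((D y) 1 : Δ) := rfl
    rw [hrfl, hDof k y hy]
    by_cases hk : k = 1
    · subst hk; rw [DirectSum.of_eq_same]; simp
    · rw [DirectSum.of_eq_of_ne _ _ _ (Ne.symm hk)]; simp [hk]
  set c : Δ := (↑u⁻¹ : Δ) with hc
  set s := (D c).support with hs
  have hcsum : c = ∑ g ∈ s, ((D c) g : Δ) := by
    calc c = (DirectSum.coeAddMonoidHom 𝒟) (D c) := by simp [hD]; exact ((AddEquiv.ofBijective _ hinternal).apply_symm_apply c).symm
    _ = (DirectSum.coeAddMonoidHom 𝒟) (∑ g ∈ s, DirectSum.of (fun g => 𝒟 g) g ((D c) g)) := by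
        rw [hs, DirectSum.sum_support_of (D c)]
    _ = ∑ g ∈ s, ((D c) g : Δ) := by rw [map_sum]; simp [DirectSum.coeAddMonoidHom_of]
  set x : Δ := ((D c) h⁻¹ : Δ) with hx
  have hxd : x * d = 1 := by
    have h1' : (1:Δ) = c * d := by rw [hc, ← hu]; simp
    have : (1:Δ) = ∑ g ∈ s, ((D c) g : Δ) * d := by
      rw [h1']; conv_lhs => rw [hcsum]
      rw [Finset.sum_mul]
    have h2 : π1 (1:Δ) = ∑ g ∈ s, π1 (((D c) g : Δ) * d) := by
      rw [← map_sum, ← this]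
    rw [hπ1hom 1 1 h1] at h2
    simp only [if_pos rfl] at h2
    have h3 : ∀ g ∈ s, π1 (((D c) g : Δ) * d) = if g = h⁻¹ then ((D c) g : Δ) * d else 0 := by
      intro g _
      rw [hπ1hom (g * h) _ (hmul g h _ d (((D c) g).2) hd)]
      congr 1
      simp [mul_eq_one_iff_eq_inv]
    rw [Finset.sum_congr rfl h3, Finset.sum_ite_eq' s h⁻¹ (fun g => ((D c) g : Δ) * d)] at h2
    by_cases hmem : h⁻¹ ∈ s
    · rw [if_pos hmem] at h2; exact h2.symm
    · rw [if_neg hmem] at h2; exact absurd h2 one_ne_zero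
  have hdx : d * x = 1 := by
    have h1' : (1:Δ) = d * c := by rw [hc, ← hu]; simp
    have : (1:Δ) = ∑ g ∈ s, d * ((D c) g : Δ) := by
      rw [h1']; conv_lhs => rw [hcsum]
      rw [Finset.mul_sum]
    have h2 : π1 (1:Δ) = ∑ g ∈ s, π1 (d * ((D c) g : Δ)) := by
      rw [← map_sum, ← this]
    rw [hπ1hom 1 1 h1] at h2
    simp only [if_pos rfl] at h2
    have h3 : ∀ g ∈ s, π1 (d * ((D c) g : Δ)) = if g = h⁻¹ then d * ((D c) g : Δ) else 0 := by
      intro g _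
      rw [hπ1hom (h * g) _ (hmul h g d _ hd (((D c) g).2))]
      congr 1
      rw [eq_iff_iff]
      constructor
      · exact fun hg => eq_inv_of_mul_eq_one_right hg
      · rintro rfl; group
    rw [Finset.sum_congr rfl h3, Finset.sum_ite_eq' s h⁻¹ (fun g => d * ((D c) g : Δ))] at h2
    by_cases hmem : h⁻¹ ∈ s
    · rw [if_pos hmem] at h2; exact h2.symm
    · rw [if_neg hmem] at h2; exact absurd h2 one_ne_zero
  exact ⟨x, ((D c) h⁻¹).2, hxd, hdx⟩

section Test
variable {Δ : Type*} [Ring Δ] [Nontrivial Δ] (𝒟 : G → AddSubgroup Δ)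
variable (hinternal : DirectSum.IsInternal 𝒟) (h1 : (1:Δ) ∈ 𝒟 1)
  (hmul : ∀ (g h : G) (a b : Δ), a ∈ 𝒟 g → b ∈ 𝒟 h → a * b ∈ 𝒟 (g * h))
  (hdiv : ∀ (g : G) (a : Δ), a ∈ 𝒟 g → a ≠ 0 → IsUnit a)
  (hom_inv : ∀ (h : G) (d : Δ), d ∈ 𝒟 h → d ≠ 0 → ∃ x ∈ 𝒟 h⁻¹, x * d = 1 ∧ d * x = 1)

include h1 hmul hom_inv in
lemma shift_iso_aux (n : ℕ) (hn : 0 < n) (gv : Fin n → G) (τ : G) :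
    (∃ e : (Fin n → Δ) ≃+ (Fin n → Δ),
    (∀ (a : Matrix (Fin n) (Fin n) Δ) (z : Fin n → Δ), e (a.mulVec z) = a.mulVec (e z)) ∧
    (∀ (σ : G) (z : Fin n → Δ),
      (∀ i, z i ∈ 𝒟 (gv i * (σ * τ) * (gv ⟨0,hn⟩)⁻¹)) ↔
      (∀ i, e z i ∈ 𝒟 (gv i * (σ * 1) * (gv ⟨0,hn⟩)⁻¹)))) ↔
      gv ⟨0, hn⟩ * τ * (gv ⟨0, hn⟩)⁻¹ ∈ {σ : G | 𝒟 σ ≠ ⊥} := by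
  set i0 : Fin n := ⟨0, hn⟩ with hi0
  constructor
  · rintro ⟨e, hcomm, hgr⟩
    set a : Matrix (Fin n) (Fin n) Δ := Matrix.single i0 i0 1 with ha
    have hproj : ∀ z : Fin n → Δ, a.mulVec z = Pi.single i0 (z i0) := by
      intro z; funext i
      simp only [ha, Matrix.mulVec, dotProduct, Matrix.single, Matrix.of_apply,
        ite_and, Pi.single_apply]
      by_cases h : i0 = i
      · subst h
        simp [Finset.sum_ite_eq]
      · rw [Finset.sum_eq_zero, if_neg (fun hh => h hh.symm)]
        intro j _
        rw [if_neg h, zero_mul]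
    have hez : e (e.symm (Pi.single i0 1)) = Pi.single i0 1 := e.apply_symm_apply _
    set z := e.symm (Pi.single i0 1) with hz
    have h2 : a.mulVec (e z) = e z := by
      rw [hez, hproj, Pi.single_eq_same]
    have h3 : a.mulVec z = z := e.injective (by rw [hcomm, h2])
    have hzsingle : z = Pi.single i0 (z i0) := by rw [← h3, hproj, Pi.single_eq_same]
    have hz0 : z i0 ≠ 0 := by
      intro h0
      have hzz : z = 0 := by rw [hzsingle, h0, Pi.single_zero]
      rw [hzz, map_zero] at hez
      have := congrFun hez i0
      rw [Pi.single_eq_same] at this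
      exact one_ne_zero this.symm
    have hmem : ∀ i, e z i ∈ 𝒟 (gv i * ((1:G) * 1) * (gv i0)⁻¹) := by
      intro i
      rw [hez]
      by_cases h : i = i0
      · subst h
        rw [Pi.single_eq_same, show gv i0 * ((1:G) * 1) * (gv i0)⁻¹ = 1 by group]
        exact h1
      · rw [Pi.single_eq_of_ne h]; exact zero_mem _
    have hfin := (hgr 1 z).mpr hmem i0
    rw [one_mul] at hfin
    intro hbot
    rw [hbot, AddSubgroup.mem_bot] at hfin
    exact hz0 hfin
  · intro hne
    obtain ⟨d, hd, hdne⟩ : ∃ d ∈ 𝒟 (gv i0 * τ * (gv i0)⁻¹), d ≠ 0 := by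
      by_contra hcon; push_neg at hcon
      exact hne ((AddSubgroup.eq_bot_iff_forall _).mpr hcon)
    obtain ⟨x, hxmem, hxd, hdx⟩ := hom_inv _ d hd hdne
    refine ⟨{ toFun := fun z i => z i * x, invFun := fun z i => z i * d,
              left_inv := ?_, right_inv := ?_, map_add' := ?_ }, ?_, ?_⟩
    · intro z; funext i; simp only; rw [mul_assoc, hxd, mul_one]
    · intro z; funext i; simp only; rw [mul_assoc, hdx, mul_one]
    · intro z w; funext i; simp [add_mul]
    · intro a z; funext i
      show (a.mulVec z) i * x = (a.mulVec fun j => z j * x) i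
      simp only [Matrix.mulVec, dotProduct, Finset.sum_mul, mul_assoc]
    · intro σ z
      constructor
      · intro hz i
        show z i * x ∈ _
        have hm := hmul _ _ _ x (hz i) hxmem
        rwa [show gv i * (σ * τ) * (gv i0)⁻¹ * (gv i0 * τ * (gv i0)⁻¹)⁻¹
            = gv i * (σ * 1) * (gv i0)⁻¹ by group] at hm
      · intro hz i
        have hz' : z i * x ∈ 𝒟 (gv i * (σ * 1) * (gv i0)⁻¹) := hz i
        have hm := hmul _ _ _ d hz' hd
        have hzi : z i * x * d = z i := by rw [mul_assoc, hxd, mul_one]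
        rwa [hzi, show gv i * (σ * 1) * (gv i0)⁻¹ * (gv i0 * τ * (gv i0)⁻¹)
            = gv i * (σ * τ) * (gv i0)⁻¹ by group] at hm
end Test

/-- `Σ_1(τ) ≅ Σ_1` iff `τ ∈ g_1⁻¹·supp(Δ)·g_1`. -/
theorem shift_iso_column_module_iff_support
    {Δ : Type*} [Ring Δ] [Nontrivial Δ] (𝒟 : G → AddSubgroup Δ)
    (h𝒟 : IsGDivisionRing 𝒟) (n : ℕ) (hn : 0 < n) (gv : Fin n → G) (τ : G) :
    ShiftIsoRel 𝒟 n gv ⟨0, hn⟩ τ 1 ↔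
      gv ⟨0, hn⟩ * τ * (gv ⟨0, hn⟩)⁻¹ ∈ {σ : G | 𝒟 σ ≠ ⊥} := by
  have hom_inv : ∀ (h : G) (d : Δ), d ∈ 𝒟 h → d ≠ 0 → ∃ x ∈ 𝒟 h⁻¹, x * d = 1 ∧ d * x = 1 := by
    intro h d hd hdne
    obtain ⟨u, hu⟩ := h𝒟.2 h d hd hdne
    exact hom_inv_test 𝒟 h𝒟.1.2.2 h𝒟.1.1 h𝒟.1.2.1 h d hd u hu
  exact shift_iso_aux 𝒟 h𝒟.1.1 h𝒟.1.2.1 hom_inv n hn gv τ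
end

section
/- Let A = M_n(Δ)(g_1,…,g_n) be a graded matrix ring over a graded division ring Δ. The number of isomorphism classes of graded simple left A-modules equals the index [G : supp(Δ)]. -/
open DirectSum

universe u v w

variable {G : Type u} [Group G] [DecidableEq G]
variable {R : Type v} [Ring R]

section Aux
variable {Δ : Type*} [Ring Δ]

private theorem homog_inv (𝒟 : G → AddSubgroup Δ)
    (hone : (1 : Δ) ∈ 𝒟 1)
    (hmul : ∀ (g h : G) (a b : Δ), a ∈ 𝒟 g → b ∈ 𝒟 h → a * b ∈ 𝒟 (g * h))
    (hint : DirectSum.IsInternal 𝒟)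
    {d : G} {u v : Δ} (hu : u ∈ 𝒟 d) (h1 : u * v = 1) (h2 : v * u = 1) :
    ∃ v' ∈ 𝒟 d⁻¹, u * v' = 1 ∧ v' * u = 1 := by
  classical
  set E : (⨁ g, 𝒟 g) ≃+ Δ := AddEquiv.ofBijective (DirectSum.coeAddMonoidHom 𝒟) hint with hE
  have hEof : ∀ (g : G) (x : 𝒟 g), E (DirectSum.of _ g x) = (x : Δ) := fun g x =>
    DirectSum.coeAddMonoidHom_of 𝒟 g x
  -- projection onto degree 1 component
  let P : Δ →+ Δ :=
  { toFun := fun x => (E.symm x 1 : Δ)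
    map_zero' := by simp
    map_add' := fun a b => by
      show ((E.symm (a + b)) 1 : Δ) = ((E.symm a) 1 : Δ) + ((E.symm b) 1 : Δ)
      rw [map_add, DirectSum.add_apply]; rfl }
  have hPmem : ∀ (g : G) (x : Δ), x ∈ 𝒟 g → P x = if g = 1 then x else 0 := by
    intro g x hx
    have hsymm : E.symm x = DirectSum.of _ g ⟨x, hx⟩ :=
      E.symm_apply_eq.mpr (hEof g ⟨x, hx⟩).symm
    show (E.symm x 1 : Δ) = _
    rw [hsymm]
    by_cases hg : g = 1
    · subst hg; rw [DirectSum.of_eq_same]; simp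
    · rw [DirectSum.of_eq_of_ne _ _ _ (Ne.symm hg)]; simp [hg]
  have hP1 : P 1 = 1 := by rw [hPmem 1 1 hone]; simp
  set w := E.symm v with hw
  have hv : v = ∑ i ∈ w.support, ((w i : Δ)) :=
    calc v = E w := (E.apply_symm_apply v).symm
    _ = E (∑ i ∈ w.support, DirectSum.of _ i (w i)) := by rw [DirectSum.sum_support_of w]
    _ = ∑ i ∈ w.support, ((w i : Δ)) := by
        rw [map_sum]; exact Finset.sum_congr rfl fun i _ => hEof i (w i)
  refine ⟨(w d⁻¹ : Δ), (w d⁻¹).2, ?_, ?_⟩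
  · have key : P (u * v) = u * (w d⁻¹ : Δ) := by
      rw [hv, Finset.mul_sum, map_sum]
      have hc : ∀ i ∈ w.support, P (u * (w i : Δ)) = if i = d⁻¹ then u * (w i : Δ) else 0 := by
        intro i _
        rw [hPmem (d * i) _ (hmul d i u _ hu (w i).2)]
        have hcond : (d * i = 1) ↔ (i = d⁻¹) :=
          ⟨fun h => eq_inv_of_mul_eq_one_right h, fun h => by subst h; simp⟩
        simp only [hcond]
      rw [Finset.sum_congr rfl hc, Finset.sum_ite_eq' w.support d⁻¹ (fun i => u * (w i : Δ))]
      by_cases hd : d⁻¹ ∈ w.support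
      · simp [hd]
      · simp [hd, DFinsupp.notMem_support_iff.mp hd]
    rw [h1, hP1] at key; exact key.symm
  · have key : P (v * u) = (w d⁻¹ : Δ) * u := by
      rw [hv, Finset.sum_mul, map_sum]
      have hc : ∀ i ∈ w.support, P ((w i : Δ) * u) = if i = d⁻¹ then (w i : Δ) * u else 0 := by
        intro i _
        rw [hPmem (i * d) _ (hmul i d _ u (w i).2 hu)]
        have hcond : (i * d = 1) ↔ (i = d⁻¹) :=
          ⟨fun h => eq_inv_of_mul_eq_one_left h, fun h => by subst h; simp⟩
        simp only [hcond]
      rw [Finset.sum_congr rfl hc, Finset.sum_ite_eq' w.support d⁻¹ (fun i => (w i : Δ) * u)]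
      by_cases hd : d⁻¹ ∈ w.support
      · simp [hd]
      · simp [hd, DFinsupp.notMem_support_iff.mp hd]
    rw [h2, hP1] at key; exact key.symm

private theorem shiftIsoRel_iff [Nontrivial Δ] (𝒟 : G → AddSubgroup Δ)
    (h𝒟 : IsGDivisionRing 𝒟) (n : ℕ) (i0 : Fin n) (gv : Fin n → G) (τ₁ τ₂ : G) :
    ShiftIsoRel 𝒟 n gv i0 τ₁ τ₂ ↔ 𝒟 (gv i0 * (τ₁⁻¹ * τ₂) * (gv i0)⁻¹) ≠ ⊥ := by
  classical
  obtain ⟨⟨hone, hmul, hint⟩, hunit⟩ := h𝒟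
  constructor
  · rintro ⟨e, hmv, hdeg⟩ hbot
    set z : Fin n → Δ := fun j => if j = i0 then 1 else 0 with hz
    have hz1 : ∀ i, z i ∈ 𝒟 (gv i * (τ₁⁻¹ * τ₁) * (gv i0)⁻¹) := by
      intro i
      by_cases hi : i = i0
      · have h1 : gv i * (τ₁⁻¹ * τ₁) * (gv i0)⁻¹ = 1 := by rw [hi]; group
        have h2 : z i = 1 := by simp [hz, hi]
        rw [h1, h2]; exact hone
      · have h2 : z i = 0 := by simp [hz, hi]
        rw [h2]; exact zero_mem _
    have hz2 := (hdeg τ₁⁻¹ z).mp hz1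
    have hzero : ∀ i, e z i = 0 := by
      intro i
      by_cases hi : i = i0
      · have hm := hz2 i0
        rw [hbot] at hm
        rw [hi]
        exact hm
      · set a : Matrix (Fin n) (Fin n) Δ := Matrix.single i0 i 1 with ha
        have h0 : a.mulVec z = 0 := by
          funext k
          simp only [Matrix.mulVec, dotProduct, Pi.zero_apply]
          apply Finset.sum_eq_zero
          intro j _
          by_cases hj : j = i0
          · subst hj
            have h0 : a k j = 0 := by
              simp only [ha, Matrix.single, Matrix.of_apply, ite_eq_right_iff, and_imp]
              intro _ h; exact absurd h hi
            rw [h0, zero_mul]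
          · simp [hz, hj]
        have := hmv a z
        rw [h0, map_zero] at this
        have h2 := congrFun this.symm i0
        simp [ha, Matrix.single, Matrix.mulVec, dotProduct, ite_mul, Finset.sum_ite_eq] at h2
        exact h2
    have : z = 0 := by
      have h0 : e z = 0 := funext hzero
      have := e.injective (by rw [h0, map_zero] : e z = e 0)
      exact this
    have : (1 : Δ) = 0 := by
      have := congrFun this i0
      simpa [hz] using this
    exact one_ne_zero this
  · intro hbot
    set d := gv i0 * (τ₁⁻¹ * τ₂) * (gv i0)⁻¹ with hd
    have : ∃ δ ∈ 𝒟 d, δ ≠ 0 := by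
      by_contra hc
      push_neg at hc
      exact hbot ((AddSubgroup.eq_bot_iff_forall _).mpr hc)
    obtain ⟨δ, hδ, hδ0⟩ := this
    obtain ⟨μ, hμ⟩ := hunit d δ hδ hδ0
    have h1 : δ * (↑μ⁻¹ : Δ) = 1 := by rw [← hμ]; exact μ.mul_inv
    have h2 : (↑μ⁻¹ : Δ) * δ = 1 := by rw [← hμ]; exact μ.inv_mul
    obtain ⟨δ', hδ', hδδ', hδ'δ⟩ := homog_inv 𝒟 hone hmul hint hδ h1 h2
    refine ⟨{ toFun := fun z i => z i * δ
              invFun := fun z i => z i * δ'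
              left_inv := fun z => funext fun i => by
                show z i * δ * δ' = z i
                rw [mul_assoc, hδδ', mul_one]
              right_inv := fun z => funext fun i => by
                show z i * δ' * δ = z i
                rw [mul_assoc, hδ'δ, mul_one]
              map_add' := fun a b => funext fun i => add_mul _ _ _ }, ?_, ?_⟩
    · intro a z
      funext i
      show (a.mulVec z) i * δ = (a.mulVec fun j => z j * δ) i
      simp [Matrix.mulVec, dotProduct, Finset.sum_mul, mul_assoc]
    · intro σ z
      constructor
      · intro h i
        show z i * δ ∈ _
        have := hmul _ _ _ _ (h i) hδ
        have heq : gv i * (σ * τ₁) * (gv i0)⁻¹ * d = gv i * (σ * τ₂) * (gv i0)⁻¹ := by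
          rw [hd]; group
        rwa [heq] at this
      · intro h i
        have hrw : z i = (z i * δ) * δ' := by rw [mul_assoc, hδδ', mul_one]
        have := hmul _ _ _ _ (h i) hδ'
        have heq : gv i * (σ * τ₂) * (gv i0)⁻¹ * d⁻¹ = gv i * (σ * τ₁) * (gv i0)⁻¹ := by
          rw [hd]; group
        rw [heq] at this
        rwa [hrw]

end Aux

/-- since every graded simple left `A`-module is a shift `Σ_1(g)`
of the column module `Σ_1`, the number of isomorphism classes of graded simple
left `A`-modules — i.e. the number of classes of shifts `Σ_1(g)` up to graded
isomorphism — equals the index `[G : supp(Δ)]`, i.e. the number of left cosets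
of the support of `Δ`. -/
theorem card_iso_classes_of_graded_simples_eq_index_of_support
    {Δ : Type*} [Ring Δ] [Nontrivial Δ] (𝒟 : G → AddSubgroup Δ)
    (h𝒟 : IsGDivisionRing 𝒟) (n : ℕ) (hn : 0 < n) (gv : Fin n → G) :
    Nat.card (Quot (fun τ₁ τ₂ : G => ShiftIsoRel 𝒟 n gv ⟨0, hn⟩ τ₁ τ₂)) =
      Nat.card (Quot (fun s t : G => s⁻¹ * t ∈ {σ : G | 𝒟 σ ≠ ⊥})) := by
  classical
  set g0 := gv ⟨0, hn⟩ with hg0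
  have key : ∀ τ₁ τ₂ : G, ShiftIsoRel 𝒟 n gv ⟨0, hn⟩ τ₁ τ₂ ↔
      𝒟 (g0 * (τ₁⁻¹ * τ₂) * g0⁻¹) ≠ ⊥ := fun τ₁ τ₂ =>
    shiftIsoRel_iff 𝒟 h𝒟 n ⟨0, hn⟩ gv τ₁ τ₂
  refine Nat.card_congr ⟨Quot.map (fun τ => g0 * τ * g0⁻¹) ?_,
    Quot.map (fun s => g0⁻¹ * s * g0) ?_, ?_, ?_⟩
  · intro a b h
    have hab := (key a b).mp h
    show 𝒟 ((g0 * a * g0⁻¹)⁻¹ * (g0 * b * g0⁻¹)) ≠ ⊥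
    have heq : (g0 * a * g0⁻¹)⁻¹ * (g0 * b * g0⁻¹) = g0 * (a⁻¹ * b) * g0⁻¹ := by group
    rw [heq]; exact hab
  · intro a b h
    apply (key _ _).mpr
    have hab : 𝒟 (a⁻¹ * b) ≠ ⊥ := h
    have heq : g0 * ((g0⁻¹ * a * g0)⁻¹ * (g0⁻¹ * b * g0)) * g0⁻¹ = a⁻¹ * b := by group
    rw [heq]; exact hab
  · intro q
    obtain ⟨x⟩ := q
    exact congrArg (Quot.mk _) (by group : g0⁻¹ * (g0 * x * g0⁻¹) * g0 = x)
  · intro q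
    obtain ⟨x⟩ := q
    exact congrArg (Quot.mk _) (by group : g0 * (g0⁻¹ * x * g0) * g0⁻¹ = x)
end

section
/- Let R be a G-graded ring. The set Z^gr(R) = ⊕_g {x ∈ R_g : the left annihilator of x is an essential left ideal of R} is a two-sided graded ideal of R. -/
open DirectSum

universe u v w

variable {G : Type u} [Group G] [DecidableEq G]
variable {R : Type v} [Ring R]

lemma mem_annLIdeal_iff {x r : R} : r ∈ annLIdeal x ↔ r * x = 0 := Iff.rfl

lemma essential_mono {I J : Submodule R R} (h : I ≤ J) (hI : IsEssentialLeftIdeal I) :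
    IsEssentialLeftIdeal J := by
  intro K hK hbot
  exact hI K hK (le_bot_iff.mp (le_trans (inf_le_inf_right K h) (le_of_eq hbot)))

lemma essential_inf {I J : Submodule R R} (hI : IsEssentialLeftIdeal I)
    (hJ : IsEssentialLeftIdeal J) : IsEssentialLeftIdeal (I ⊓ J) := by
  intro K hK
  have h2 : I ⊓ (J ⊓ K) ≠ ⊥ := hI _ (hJ K hK)
  rwa [← inf_assoc] at h2

/-- Right multiplication by `r` as a left `R`-linear map. -/
def rmulLin (r : R) : R →ₗ[R] R where
  toFun s := s * r
  map_add' a b := add_mul a b r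
  map_smul' c s := mul_assoc c s r

lemma essential_comap (r : R) {I : Submodule R R} (hI : IsEssentialLeftIdeal I) :
    IsEssentialLeftIdeal (I.comap (rmulLin r)) := by
  intro J hJ
  by_cases h : J.map (rmulLin r) = ⊥
  · have hle : J ≤ I.comap (rmulLin r) := by
      intro j hj
      have : rmulLin r j = 0 :=
        (Submodule.eq_bot_iff _).mp h (rmulLin r j) ⟨j, hj, rfl⟩
      simp only [Submodule.mem_comap, this]
      exact I.zero_mem
    rw [inf_eq_right.mpr hle]
    exact hJ
  · have h2 := hI _ h
    obtain ⟨z, hz, hz0⟩ := (Submodule.ne_bot_iff _).mp h2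
    obtain ⟨hzI, j, hjJ, hjz⟩ := hz
    refine (Submodule.ne_bot_iff _).mpr ⟨j, ⟨?_, hjJ⟩, ?_⟩
    · simpa [Submodule.mem_comap, hjz] using hzI
    · intro h0
      exact hz0 (by rw [← hjz, h0]; exact (rmulLin r).map_zero)

lemma annLIdeal_mul (r x : R) :
    annLIdeal (r * x) = (annLIdeal x).comap (rmulLin r) := by
  ext s
  show s * (r * x) = 0 ↔ s * r * x = 0
  rw [mul_assoc]

/-- `Z^gr(R) = ⊕_g Z^gr(R)_g` is a two-sided graded ideal: each
homogeneous piece is an additive subgroup, and the resulting graded additive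
subgroup is closed under left and right multiplication by arbitrary elements. -/
theorem graded_singular_is_graded_twosided_ideal
    (𝒜 : G → AddSubgroup R) (h𝒜 : IsGRing 𝒜) :
    (∀ g : G, ∀ x ∈ grSingSet 𝒜 g, ∀ y ∈ grSingSet 𝒜 g,
        x + y ∈ grSingSet 𝒜 g ∧ -x ∈ grSingSet 𝒜 g) ∧
    (∀ x ∈ grSing 𝒜, ∀ r : R, r * x ∈ grSing 𝒜 ∧ x * r ∈ grSing 𝒜) := by
  obtain ⟨hone, hmul, hint⟩ := h𝒜
  have key : ∀ (g : G) (x : R), x ∈ grSingSet 𝒜 g → ∀ r : R,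
      r * x ∈ grSing 𝒜 ∧ x * r ∈ grSing 𝒜 := by
    intro g x hx r
    obtain ⟨z, rfl⟩ := hint.surjective r
    induction z using DirectSum.induction_on with
    | zero => simp only [map_zero, zero_mul, mul_zero]; exact ⟨(grSing 𝒜).zero_mem, (grSing 𝒜).zero_mem⟩
    | of h a =>
        rw [DirectSum.coeAddMonoidHom_of]
        constructor
        · apply AddSubgroup.subset_closure
          refine Set.mem_iUnion.mpr ⟨h * g, ?_⟩
          refine ⟨hmul h g a x a.2 hx.1, ?_⟩
          rw [annLIdeal_mul]
          exact essential_comap _ hx.2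
        · apply AddSubgroup.subset_closure
          refine Set.mem_iUnion.mpr ⟨g * h, ?_⟩
          refine ⟨hmul g h x a hx.1 a.2, ?_⟩
          refine essential_mono ?_ hx.2
          intro s hs
          show s * (x * (a : R)) = 0
          rw [← mul_assoc, hs, zero_mul]
    | add z1 z2 ih1 ih2 =>
        rw [map_add, add_mul, mul_add]
        exact ⟨(grSing 𝒜).add_mem ih1.1 ih2.1, (grSing 𝒜).add_mem ih1.2 ih2.2⟩
  constructor
  · intro g x hx y hy
    refine ⟨⟨(𝒜 g).add_mem hx.1 hy.1, ?_⟩, ⟨(𝒜 g).neg_mem hx.1, ?_⟩⟩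
    · refine essential_mono ?_ (essential_inf hx.2 hy.2)
      intro s hs
      show s * (x + y) = 0
      rw [mul_add]
      rw [show s * x = 0 from hs.1, show s * y = 0 from hs.2, add_zero]
    · have : annLIdeal (-x) = annLIdeal x := by
        ext s
        show s * (-x) = 0 ↔ s * x = 0
        rw [mul_neg, neg_eq_zero]
      rw [this]; exact hx.2
  · intro x hx r
    induction hx using AddSubgroup.closure_induction with
    | mem y hy =>
        obtain ⟨g, hg⟩ := Set.mem_iUnion.mp hy
        exact key g y hg r
    | zero => simp only [zero_mul, mul_zero]; exact ⟨(grSing 𝒜).zero_mem, (grSing 𝒜).zero_mem⟩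
    | add a b _ _ ha hb =>
        rw [mul_add, add_mul]
        exact ⟨(grSing 𝒜).add_mem ha.1 hb.1, (grSing 𝒜).add_mem ha.2 hb.2⟩
    | neg a _ ha =>
        rw [mul_neg, neg_mul]
        exact ⟨(grSing 𝒜).neg_mem ha.1, (grSing 𝒜).neg_mem ha.2⟩
end

section
/- Let R be a graded left Noetherian G-graded ring. Then the graded singular ideal Z^gr(R) is nilpotent. -/
open DirectSum

universe u v w

variable {G : Type u} [Group G] [DecidableEq G]
variable {R : Type v} [Ring R]

section AuxiliaryLemmas

set_option linter.unusedSectionVars false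
set_option maxHeartbeats 1000000

noncomputable section

/-- Independence of homogeneous components with an injective degree-relabelling. -/
lemma my_indep (𝒜 : G → AddSubgroup R) (hint : DirectSum.IsInternal 𝒜)
    (s : Finset G) (φ : G → G) (hφ : Set.InjOn φ s) (c : G → R)
    (hc : ∀ g ∈ s, c g ∈ 𝒜 (φ g)) (hsum : ∑ g ∈ s, c g = 0) :
    ∀ g ∈ s, c g = 0 := by
  classical
  set w : ⨁ g, 𝒜 g := ∑ g ∈ s.attach, DirectSum.of (fun i => (𝒜 i : AddSubgroup R)) (φ g.1)
    ⟨c g.1, hc g.1 g.2⟩ with hw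
  have hmap : DirectSum.coeAddMonoidHom 𝒜 w = 0 := by
    rw [hw, map_sum]
    simp only [DirectSum.coeAddMonoidHom_of]
    rw [← hsum, ← Finset.sum_attach s c]
  have hw0 : w = 0 := hint.injective (by rw [hmap]; simp)
  intro g₀ hg₀
  have happ : w (φ g₀) = ⟨c g₀, hc g₀ hg₀⟩ := by
    rw [hw, DFinsupp.finset_sum_apply]
    rw [Finset.sum_eq_single_of_mem (⟨g₀, hg₀⟩ : {x // x ∈ s}) (Finset.mem_attach s _)]
    · exact DirectSum.of_eq_same _ _
    · intro b _ hb
      have hne : φ b.1 ≠ φ g₀ := fun h => hb (Subtype.ext (hφ b.2 hg₀ h))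
      exact DirectSum.of_eq_of_ne _ _ _ hne.symm
  rw [hw0] at happ
  have := congrArg (fun v : ↥(𝒜 (φ g₀)) => (v : R)) happ.symm
  simpa using this

open Classical in
/-- the `g`-component of `x` -/
noncomputable def cpt (𝒜 : G → AddSubgroup R) (hint : DirectSum.IsInternal 𝒜) (g : G) (x : R) : R :=
  ((AddEquiv.ofBijective (DirectSum.coeAddMonoidHom 𝒜) hint).symm x g : R)

lemma cpt_mem (𝒜 : G → AddSubgroup R) (hint : DirectSum.IsInternal 𝒜) (g : G) (x : R) :
    cpt 𝒜 hint g x ∈ 𝒜 g :=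
  ((AddEquiv.ofBijective (DirectSum.coeAddMonoidHom 𝒜) hint).symm x g).2

open Classical in
lemma cpt_sum (𝒜 : G → AddSubgroup R) (hint : DirectSum.IsInternal 𝒜) (x : R) :
    ∑ g ∈ ((AddEquiv.ofBijective (DirectSum.coeAddMonoidHom 𝒜) hint).symm x).support,
      cpt 𝒜 hint g x = x := by
  classical
  set e := AddEquiv.ofBijective (DirectSum.coeAddMonoidHom 𝒜) hint with he
  have h1 : (∑ g ∈ (e.symm x).support, DirectSum.of (fun i => (𝒜 i : AddSubgroup R)) g
      ((e.symm x) g)) = e.symm x := DirectSum.sum_support_of _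
  have := congrArg e h1
  rw [AddEquiv.apply_symm_apply, map_sum] at this
  conv_rhs => rw [← this]
  apply Finset.sum_congr rfl
  intro g _
  show cpt 𝒜 hint g x = e (DirectSum.of (fun i => (𝒜 i : AddSubgroup R)) g ((e.symm x) g))
  have : ⇑e = ⇑(DirectSum.coeAddMonoidHom 𝒜) := by rw [he]; rfl
  rw [this, DirectSum.coeAddMonoidHom_of]
  rfl

lemma graded_of_cpt (𝒜 : G → AddSubgroup R) (hint : DirectSum.IsInternal 𝒜)
    (I : Submodule R R) (hcpt : ∀ r ∈ I, ∀ g, cpt 𝒜 hint g r ∈ I) :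
    IsGradedLeftIdeal 𝒜 I := by
  classical
  apply le_antisymm
  · intro x hx
    rw [← cpt_sum 𝒜 hint x]
    apply Submodule.sum_mem
    intro g _
    apply Submodule.subset_span
    exact ⟨hcpt x hx g, Set.mem_iUnion.2 ⟨g, cpt_mem 𝒜 hint g x⟩⟩
  · rw [Submodule.span_le]
    exact Set.inter_subset_left

open Classical in
lemma cpt_mul_eq_zero (𝒜 : G → AddSubgroup R) (hint : DirectSum.IsInternal 𝒜)
    (r x : R) (d : G) (hx : x ∈ 𝒜 d)
    (hmul : ∀ g h : G, ∀ a b : R, a ∈ 𝒜 g → b ∈ 𝒜 h → a * b ∈ 𝒜 (g * h))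
    (hr : r * x = 0) (g : G) : cpt 𝒜 hint g r * x = 0 := by
  classical
  set e := AddEquiv.ofBijective (DirectSum.coeAddMonoidHom 𝒜) hint with he
  by_cases hg : g ∈ (e.symm r).support
  · have hsum : ∑ g' ∈ (e.symm r).support, cpt 𝒜 hint g' r * x = 0 := by
      rw [← Finset.sum_mul, cpt_sum 𝒜 hint r, hr]
    exact my_indep 𝒜 hint (e.symm r).support (fun g' => g' * d)
      (fun a _ b _ hab => mul_right_cancel hab)
      (fun g' => cpt 𝒜 hint g' r * x)
      (fun g' _ => hmul g' d _ _ (cpt_mem 𝒜 hint g' r) hx) hsum g hg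
  · have : cpt 𝒜 hint g r = 0 := by
      have := DFinsupp.notMem_support_iff.1 hg
      rw [he] at this
      simp [cpt, this]
    rw [this, zero_mul]

/-- Left annihilator of a set, as a left ideal. -/
def lannSet (X : Set R) : Submodule R R where
  carrier := {r : R | ∀ x ∈ X, r * x = 0}
  add_mem' := by
    intro a b ha hb
    intro x hx
    rw [add_mul, ha x hx, hb x hx, add_zero]
  zero_mem' := by intro x hx; rw [zero_mul]
  smul_mem' := by
    intro c a ha x hx
    show c * a * x = 0
    rw [mul_assoc, ha x hx, mul_zero]

lemma mem_lannSet {X : Set R} {r : R} : r ∈ lannSet X ↔ ∀ x ∈ X, r * x = 0 := Iff.rfl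

lemma mem_annLIdeal {a r : R} : r ∈ annLIdeal a ↔ r * a = 0 := Iff.rfl

lemma lannSet_graded (𝒜 : G → AddSubgroup R) (hint : DirectSum.IsInternal 𝒜)
    (hmul : ∀ g h : G, ∀ a b : R, a ∈ 𝒜 g → b ∈ 𝒜 h → a * b ∈ 𝒜 (g * h))
    (X : Set R) (hX : ∀ x ∈ X, ∃ d, x ∈ 𝒜 d) :
    IsGradedLeftIdeal 𝒜 (lannSet X) := by
  apply graded_of_cpt 𝒜 hint
  intro r hr g x hx
  obtain ⟨d, hd⟩ := hX x hx
  exact cpt_mul_eq_zero 𝒜 hint r x d hd hmul (hr x hx) g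

lemma annLIdeal_graded (𝒜 : G → AddSubgroup R) (hint : DirectSum.IsInternal 𝒜)
    (hmul : ∀ g h : G, ∀ a b : R, a ∈ 𝒜 g → b ∈ 𝒜 h → a * b ∈ 𝒜 (g * h))
    (a : R) (d : G) (ha : a ∈ 𝒜 d) :
    IsGradedLeftIdeal 𝒜 (annLIdeal a) := by
  apply graded_of_cpt 𝒜 hint
  intro r hr g
  exact cpt_mul_eq_zero 𝒜 hint r a d ha hmul hr g

/-- any nonempty family of graded left ideals has a maximal element, under ACC. -/
lemma exists_max_graded (𝒜 : G → AddSubgroup R) (hnoeth : GrLeftNoetherian 𝒜)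
    (F : Set (Submodule R R)) (hne : F.Nonempty)
    (hgr : ∀ I ∈ F, IsGradedLeftIdeal 𝒜 I) :
    ∃ I ∈ F, ∀ J ∈ F, I ≤ J → J = I := by
  by_contra h
  push_neg at h
  obtain ⟨I₀, hI₀⟩ := hne
  choose! f hf1 hf2 hf3 using h
  let seq : ℕ → {I : Submodule R R // I ∈ F} := fun n =>
    Nat.rec ⟨I₀, hI₀⟩ (fun _ p => ⟨f p.1, hf1 p.1 p.2⟩) n
  have hseq : ∀ k, (seq (k+1)).1 = f (seq k).1 := fun k => rfl
  have hmono : Monotone (fun k => (seq k).1) :=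
    monotone_nat_of_le_succ (fun k => by rw [hseq]; exact hf2 _ (seq k).2)
  obtain ⟨N, hN⟩ := hnoeth _ (fun k => hgr _ (seq k).2) hmono
  have hcontra := hN (N+1) (Nat.le_succ N)
  rw [hseq] at hcontra
  exact hf3 _ (seq N).2 hcontra

/-- Products of `k` homogeneous singular elements. -/
def ZnSet (𝒜 : G → AddSubgroup R) (k : ℕ) : Set R :=
  {z : R | ∃ l : List R, (∀ x ∈ l, x ∈ ⋃ g, grSingSet 𝒜 g) ∧ l.length = k ∧ l.prod = z}

lemma mul_closure_aux (𝒜 : G → AddSubgroup R) (k : ℕ) (x y : R)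
    (hx : x ∈ AddSubgroup.closure (⋃ g, grSingSet 𝒜 g))
    (hy : y ∈ AddSubgroup.closure (ZnSet 𝒜 k)) :
    x * y ∈ AddSubgroup.closure (ZnSet 𝒜 (k+1)) := by
  revert y
  refine AddSubgroup.closure_induction
    (p := fun x _ => ∀ y, y ∈ AddSubgroup.closure (ZnSet 𝒜 k) →
      x * y ∈ AddSubgroup.closure (ZnSet 𝒜 (k+1))) ?_ ?_ ?_ ?_ hx
  · intro x hxS y hy
    refine AddSubgroup.closure_induction
      (p := fun y _ => x * y ∈ AddSubgroup.closure (ZnSet 𝒜 (k+1))) ?_ ?_ ?_ ?_ hy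
    · intro y hyZ
      apply AddSubgroup.subset_closure
      obtain ⟨l, h1, h2, h3⟩ := hyZ
      refine ⟨x :: l, ?_, by simp [h2], by rw [List.prod_cons, h3]⟩
      intro u hu
      rcases List.mem_cons.1 hu with h | h
      · exact h ▸ hxS
      · exact h1 u h
    · beta_reduce; rw [mul_zero]; exact zero_mem _
    · intro a b _ _ pa pb; beta_reduce at pa pb ⊢; rw [mul_add]; exact add_mem pa pb
    · intro a _ pa; beta_reduce at pa ⊢; rw [mul_neg]; exact neg_mem pa
  · intro y _; beta_reduce; rw [zero_mul]; exact zero_mem _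
  · intro a b _ _ pa pb y hy
    beta_reduce at pa pb ⊢
    rw [add_mul]; exact add_mem (pa y hy) (pb y hy)
  · intro a _ pa y hy; beta_reduce at pa ⊢; rw [neg_mul]; exact neg_mem (pa y hy)

lemma prod_mem_closure (𝒜 : G → AddSubgroup R) :
    ∀ l : List R, (∀ x ∈ l, x ∈ grSing 𝒜) →
      l.prod ∈ AddSubgroup.closure (ZnSet 𝒜 l.length) := by
  intro l
  induction l with
  | nil =>
    intro _
    apply AddSubgroup.subset_closure
    exact ⟨[], by simp, rfl, List.prod_nil⟩
  | cons z t ih =>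
    intro hl
    rw [List.prod_cons, List.length_cons]
    apply mul_closure_aux 𝒜 t.length z t.prod
    · exact hl z List.mem_cons_self
    · exact ih (fun x hx => hl x (List.mem_cons_of_mem _ hx))

end

end AuxiliaryLemmas

set_option maxHeartbeats 1000000 in
/-- over a graded left Noetherian graded ring, the graded singular
ideal is nilpotent: there is `m > 0` such that every product of `m` elements of
`Z^gr(R)` vanishes. -/
theorem graded_singular_nilpotent_of_graded_left_noetherian
    (𝒜 : G → AddSubgroup R) (h𝒜 : IsGRing 𝒜) (hnoeth : GrLeftNoetherian 𝒜) :
    ∃ m : ℕ, 0 < m ∧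
      ∀ l : List R, (∀ x ∈ l, x ∈ grSing 𝒜) → l.length = m → l.prod = 0 := by
  classical
  obtain ⟨h1, hmul, hint⟩ := h𝒜
  -- the ascending chain of left annihilators of products
  set C : ℕ → Submodule R R := fun k => lannSet (ZnSet 𝒜 k) with hCdef
  have hprodhom : ∀ l : List R, (∀ x ∈ l, x ∈ ⋃ g, grSingSet 𝒜 g) → ∃ g, l.prod ∈ 𝒜 g := by
    intro l
    induction l with
    | nil => intro _; exact ⟨1, by simpa [List.prod_nil] using h1⟩
    | cons z t ih =>
      intro hl
      obtain ⟨gz, hgz⟩ := Set.mem_iUnion.1 (hl z List.mem_cons_self)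
      obtain ⟨gt, hgt⟩ := ih (fun x hx => hl x (List.mem_cons_of_mem _ hx))
      exact ⟨gz * gt, by rw [List.prod_cons]; exact hmul _ _ _ _ hgz.1 hgt⟩
  have hZhom : ∀ k, ∀ v ∈ ZnSet 𝒜 k, ∃ d, v ∈ 𝒜 d := by
    intro k v ⟨l, hl1, _, hl3⟩
    exact hl3 ▸ hprodhom l hl1
  have hCgraded : ∀ k, IsGradedLeftIdeal 𝒜 (C k) :=
    fun k => lannSet_graded 𝒜 hint hmul _ (hZhom k)
  have hCmono : Monotone C := by
    apply monotone_nat_of_le_succ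
    intro k r hr
    intro v hv
    obtain ⟨l, hl1, hl2, hl3⟩ := hv
    have hlne : l ≠ [] := by intro h; rw [h] at hl2; simp at hl2
    have hsplit := List.dropLast_append_getLast hlne
    have hlast : l.getLast hlne ∈ ⋃ g, grSingSet 𝒜 g := hl1 _ (List.getLast_mem hlne)
    have hdrop : l.dropLast.prod ∈ ZnSet 𝒜 k := by
      refine ⟨l.dropLast, fun x hx => hl1 x (List.dropLast_subset l hx), ?_, rfl⟩
      rw [List.length_dropLast, hl2]
      rfl
    have hv' : v = l.dropLast.prod * l.getLast hlne := by
      rw [← hl3]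
      conv_lhs => rw [← hsplit]
      rw [List.prod_append, List.prod_singleton]
    rw [hv', ← mul_assoc, hr _ hdrop, zero_mul]
  obtain ⟨n, hn⟩ := hnoeth C hCgraded hCmono
  refine ⟨n + 1, Nat.succ_pos n, ?_⟩
  -- Step 1: every product of n+1 homogeneous singular elements vanishes
  have key : ∀ v ∈ ZnSet 𝒜 (n+1), v = 0 := by
    by_contra hk
    push_neg at hk
    obtain ⟨v, hv, hv0⟩ := hk
    obtain ⟨l, hl1, hl2, hl3⟩ := hv
    -- split off the head
    obtain ⟨z, t, rfl⟩ : ∃ z t, l = z :: t := by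
      cases l with
      | nil => simp at hl2
      | cons z t => exact ⟨z, t, rfl⟩
    have htZ : t.prod ∈ ZnSet 𝒜 n :=
      ⟨t, fun x hx => hl1 x (List.mem_cons_of_mem _ hx), by simpa using hl2, rfl⟩
    obtain ⟨gz, hzmem⟩ := Set.mem_iUnion.1 (hl1 z List.mem_cons_self)
    -- the family of annihilators of homogeneous elements not killing ZnSet n
    set F : Set (Submodule R R) :=
      {I | ∃ a : R, (∃ g, a ∈ 𝒜 g) ∧ (∃ w ∈ ZnSet 𝒜 n, a * w ≠ 0) ∧ I = annLIdeal a} with hF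
    have hFne : F.Nonempty := by
      refine ⟨annLIdeal z, z, ⟨gz, hzmem.1⟩, ⟨t.prod, htZ, ?_⟩, rfl⟩
      rw [← List.prod_cons, hl3]
      exact hv0
    have hFgr : ∀ I ∈ F, IsGradedLeftIdeal 𝒜 I := by
      rintro I ⟨a, ⟨g, hg⟩, -, rfl⟩
      exact annLIdeal_graded 𝒜 hint hmul a g hg
    obtain ⟨I, ⟨a, ⟨d, had⟩, ⟨w₀, hw₀, haw₀⟩, rfl⟩, hImax⟩ :=
      exists_max_graded 𝒜 hnoeth F hFne hFgr
    -- the key claim: a * (z' * w) = 0 for z' singular homogeneous, w product of length n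
    have claim : ∀ z' ∈ ⋃ g, grSingSet 𝒜 g, ∀ w ∈ ZnSet 𝒜 n, a * (z' * w) = 0 := by
      intro z' hz' w hw
      by_contra hne0
      obtain ⟨g', hz'g⟩ := Set.mem_iUnion.1 hz'
      obtain ⟨hz'A, hz'ess⟩ := hz'g
      have hle : annLIdeal a ≤ annLIdeal (a * z') := by
        intro r hr
        rw [mem_annLIdeal] at hr ⊢
        rw [← mul_assoc, hr, zero_mul]
      have hFmem : annLIdeal (a * z') ∈ F := by
        refine ⟨a * z', ⟨d * g', hmul _ _ _ _ had hz'A⟩, ⟨w, hw, ?_⟩, rfl⟩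
        rwa [mul_assoc]
      have heq := hImax _ hFmem hle
      have ha0 : a ≠ 0 := by
        rintro rfl
        rw [zero_mul] at hne0
        exact hne0 rfl
      have hJ : Submodule.span R ({a} : Set R) ≠ ⊥ := by
        rwa [Ne, Submodule.span_singleton_eq_bot]
      obtain ⟨y, hy, hy0⟩ := (Submodule.ne_bot_iff _).1 (hz'ess _ hJ)
      obtain ⟨r, hr⟩ := Submodule.mem_span_singleton.1 hy.2
      rw [smul_eq_mul] at hr
      have hyz : y * z' = 0 := hy.1
      have h2 : r ∈ annLIdeal (a * z') := by
        rw [mem_annLIdeal, ← mul_assoc, hr]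
        exact hyz
      rw [heq, mem_annLIdeal] at h2
      exact hy0 (by rw [← hr, h2])
    -- conclude a ∈ C (n+1) = C n, contradiction
    have haC : a ∈ C (n+1) := by
      intro v' hv'
      obtain ⟨l', hl'1, hl'2, hl'3⟩ := hv'
      obtain ⟨z'', t'', rfl⟩ : ∃ z'' t'', l' = z'' :: t'' := by
        cases l' with
        | nil => simp at hl'2
        | cons z'' t'' => exact ⟨z'', t'', rfl⟩
      have ht''Z : t''.prod ∈ ZnSet 𝒜 n :=
        ⟨t'', fun x hx => hl'1 x (List.mem_cons_of_mem _ hx), by simpa using hl'2, rfl⟩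
      rw [← hl'3, List.prod_cons]
      exact claim z'' (hl'1 z'' List.mem_cons_self) t''.prod ht''Z
    rw [hn (n+1) (Nat.le_succ n)] at haC
    exact haw₀ (haC w₀ hw₀)
  -- Step 2: extend to the full graded singular ideal
  intro l hl hlen
  have hmem : l.prod ∈ AddSubgroup.closure (ZnSet 𝒜 l.length) := prod_mem_closure 𝒜 l hl
  rw [hlen] at hmem
  have hbot : AddSubgroup.closure (ZnSet 𝒜 (n+1)) ≤ ⊥ := by
    rw [AddSubgroup.closure_le]
    intro x hx
    rw [SetLike.mem_coe, AddSubgroup.mem_bot]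
    exact key x hx
  exact AddSubgroup.mem_bot.1 (hbot hmem)
end

section
/- Let R be a G-graded ring and a ∈ R_g a homogeneous element. Then the left ideal Ra is a direct summand of R as a graded left R-module if and only if there exists b ∈ R_{g^{-1}} with a = aba. -/
open DirectSum

universe u v w

variable {G : Type u} [Group G] [DecidableEq G]
variable {R : Type v} [Ring R]

lemma key_graded_regular (𝒜 : G → AddSubgroup R)
    (hmul : ∀ (g h : G) (a b : R), a ∈ 𝒜 g → b ∈ 𝒜 h → a * b ∈ 𝒜 (g * h))
    (hint : DirectSum.IsInternal 𝒜) (g : G) (a : R) (ha : a ∈ 𝒜 g)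
    (b : R) (hab : a = a * b * a) : ∃ b' ∈ 𝒜 g⁻¹, a = a * b' * a := by
  classical
  set e := AddEquiv.ofBijective (DirectSum.coeAddMonoidHom 𝒜) hint with he
  set π : R →+ R :=
    ((𝒜 g).subtype.comp (DFinsupp.evalAddMonoidHom g)).comp e.symm.toAddMonoidHom with hπ
  have hsymm : ∀ (k : G) (r : R) (hr : r ∈ 𝒜 k),
      e.symm r = DirectSum.of (fun i => 𝒜 i) k ⟨r, hr⟩ := by
    intro k r hr
    rw [AddEquiv.symm_apply_eq]
    exact (DirectSum.coeAddMonoidHom_of 𝒜 k ⟨r, hr⟩).symm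
  have hπ_same : ∀ r ∈ 𝒜 g, π r = r := by
    intro r hr
    rw [hπ]
    simp only [AddMonoidHom.comp_apply, AddEquiv.coe_toAddMonoidHom, hsymm g r hr]
    show ((DirectSum.of (fun i => 𝒜 i) g ⟨r, hr⟩) g : R) = r
    rw [DirectSum.of_eq_same]
  have hπ_ne : ∀ (k : G), k ≠ g → ∀ r ∈ 𝒜 k, π r = 0 := by
    intro k hk r hr
    rw [hπ]
    simp only [AddMonoidHom.comp_apply, AddEquiv.coe_toAddMonoidHom, hsymm k r hr]
    show ((DirectSum.of (fun i => 𝒜 i) k ⟨r, hr⟩) g : R) = 0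
    rw [DirectSum.of_eq_of_ne _ _ _ hk.symm, AddSubgroup.coe_zero]
  obtain ⟨x, hx⟩ := hint.surjective b
  refine ⟨(x g⁻¹ : R), (x g⁻¹).2, ?_⟩
  have hb : b = ∑ i ∈ DFinsupp.support x, (x i : R) := by
    rw [← hx]
    conv_lhs => rw [← DirectSum.sum_support_of x]
    rw [map_sum]
    exact Finset.sum_congr rfl fun i _ => DirectSum.coeAddMonoidHom_of _ _ _
  have hsum : a * b * a = ∑ i ∈ DFinsupp.support x, a * (x i : R) * a := by
    rw [hb, Finset.mul_sum, Finset.sum_mul]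
  have hmem : ∀ i : G, a * (x i : R) * a ∈ 𝒜 (g * i * g) := fun i =>
    hmul _ _ _ _ (hmul _ _ _ _ ha (x i).2) ha
  have hcalc : π (a * b * a) =
      ∑ i ∈ DFinsupp.support x, if i = g⁻¹ then a * (x g⁻¹ : R) * a else 0 := by
    rw [hsum, map_sum]
    refine Finset.sum_congr rfl fun i _ => ?_
    by_cases hi : i = g⁻¹
    · subst hi
      simp only [if_pos rfl]
      have hm := hmem g⁻¹
      rw [show g * g⁻¹ * g = g from by group] at hm
      exact hπ_same _ hm
    · rw [if_neg hi]
      refine hπ_ne (g * i * g) ?_ _ (hmem i)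
      intro h
      apply hi
      have h2 : g * (i * g) = g * 1 := by rw [← mul_assoc, h, mul_one]
      exact eq_inv_of_mul_eq_one_left (mul_left_cancel h2)
  rw [Finset.sum_ite_eq' _ _ (fun _ => a * (x g⁻¹ : R) * a)] at hcalc
  have ha' : π a = a := hπ_same a ha
  rw [← hab, ha'] at hcalc
  by_cases hg : g⁻¹ ∈ DFinsupp.support x
  · rwa [if_pos hg] at hcalc
  · rw [if_neg hg] at hcalc
    rw [DFinsupp.notMem_support_iff.mp hg]
    simp [hcalc]

theorem span_singleton_isCompl_iff_regular_element'
    (𝒜 : G → AddSubgroup R)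
    (hone : (1 : R) ∈ 𝒜 1)
    (hmul : ∀ (g h : G) (a b : R), a ∈ 𝒜 g → b ∈ 𝒜 h → a * b ∈ 𝒜 (g * h))
    (hint : DirectSum.IsInternal 𝒜) (g : G) (a : R) (ha : a ∈ 𝒜 g)
    (IsGradedLeftIdeal : (G → AddSubgroup R) → Submodule R R → Prop)
    (hdef : ∀ I, IsGradedLeftIdeal 𝒜 I ↔
      I = Submodule.span R ((I : Set R) ∩ ⋃ g, (𝒜 g : Set R))) :
    (∃ I : Submodule R R, IsGradedLeftIdeal 𝒜 I ∧ IsCompl (Submodule.span R {a}) I) ↔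
      ∃ b ∈ 𝒜 g⁻¹, a = a * b * a := by
  constructor
  · rintro ⟨I, _, hcompl⟩
    have h1 : (1 : R) ∈ Submodule.span R {a} ⊔ I := by
      rw [hcompl.sup_eq_top]; trivial
    obtain ⟨y, hy, z, hz, hyz⟩ := Submodule.mem_sup.mp h1
    obtain ⟨b, rfl⟩ := Submodule.mem_span_singleton.mp hy
    have hsum : a = a * b * a + a * z := by
      calc a = a * (b • a + z) := by rw [hyz, mul_one]
      _ = a * b * a + a * z := by simp [smul_eq_mul, mul_add, mul_assoc]
    have haz : a - a * b * a = a * z := sub_eq_of_eq_add' hsum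
    have hmemL : a - a * b * a ∈ Submodule.span R {a} :=
      sub_mem (Submodule.mem_span_singleton_self a)
        (Submodule.mem_span_singleton.mpr ⟨a * b, rfl⟩)
    have hmemR : a - a * b * a ∈ I := by
      rw [haz]
      exact I.smul_mem a hz
    have : a - a * b * a = 0 := by
      have h0 := hcompl.inf_eq_bot
      have : a - a * b * a ∈ Submodule.span R {a} ⊓ I := ⟨hmemL, hmemR⟩
      rwa [h0, Submodule.mem_bot] at this
    exact key_graded_regular 𝒜 hmul hint g a ha b (sub_eq_zero.mp this)
  · rintro ⟨b, hb, hab⟩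
    have heA : b * a ∈ 𝒜 1 := by
      have := hmul g⁻¹ g b a hb ha
      rwa [inv_mul_cancel] at this
    have hee : (b * a) * (b * a) = b * a := by
      calc (b * a) * (b * a) = b * (a * b * a) := by noncomm_ring
      _ = b * a := by rw [← hab]
    refine ⟨Submodule.span R {1 - b * a}, ?_, ?_, ?_⟩
    · rw [hdef]
      apply le_antisymm
      · rw [Submodule.span_le]
        intro x hx
        rw [Set.mem_singleton_iff] at hx
        subst hx
        apply Submodule.subset_span
        exact ⟨Submodule.mem_span_singleton_self _,
          Set.mem_iUnion.mpr ⟨1, sub_mem hone heA⟩⟩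
      · rw [Submodule.span_le]
        exact Set.inter_subset_left
    · rw [disjoint_iff, Submodule.eq_bot_iff]
      rintro x ⟨hx1, hx2⟩
      obtain ⟨r, rfl⟩ := Submodule.mem_span_singleton.mp hx1
      obtain ⟨s, hs⟩ := Submodule.mem_span_singleton.mp hx2
      have h1 : (r • a) * (b * a) = r • a := by
        simp only [smul_eq_mul]
        calc r * a * (b * a) = r * (a * b * a) := by noncomm_ring
        _ = r * a := by rw [← hab]
      have h2 : (r • a) * (b * a) = 0 := by
        rw [← hs]
        simp only [smul_eq_mul]
        calc s * (1 - b * a) * (b * a) = s * (b * a - (b * a) * (b * a)) := by noncomm_ring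
        _ = 0 := by rw [hee, sub_self, mul_zero]
      rw [← h1, h2]
    · rw [codisjoint_iff, Submodule.eq_top_iff']
      intro x
      have : x = (x * b) * a + x * (1 - b * a) := by noncomm_ring
      rw [this]
      exact Submodule.add_mem _
        (Submodule.mem_sup_left (Submodule.mem_span_singleton.mpr ⟨x * b, rfl⟩))
        (Submodule.mem_sup_right (Submodule.mem_span_singleton.mpr ⟨x, rfl⟩))

/-- for homogeneous `a ∈ R_g`, the left ideal `Ra` is a direct
summand of `R` as a graded left module iff `a = aba` for some `b ∈ R_{g⁻¹}`. -/
theorem span_singleton_isCompl_iff_regular_element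
    (𝒜 : G → AddSubgroup R) (h𝒜 : IsGRing 𝒜) (g : G) (a : R) (ha : a ∈ 𝒜 g) :
    (∃ I : Submodule R R, IsGradedLeftIdeal 𝒜 I ∧ IsCompl (Submodule.span R {a}) I) ↔
      ∃ b ∈ 𝒜 g⁻¹, a = a * b * a := by
  obtain ⟨hone, hmul, hint⟩ := h𝒜
  exact span_singleton_isCompl_iff_regular_element' 𝒜 hone hmul hint g a ha
    IsGradedLeftIdeal (fun _ => Iff.rfl)
end

section
/- A G-graded ring R is graded semisimple if and only if R is graded left Noetherian and graded von Neumann regular. -/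
open DirectSum

universe u v w

variable {G : Type u} [Group G] [DecidableEq G]
variable {R : Type v} [Ring R]

set_option linter.unusedSectionVars false

namespace GradedSS

section Machinery

variable (𝒜 : G → AddSubgroup R) [DirectSum.Decomposition 𝒜]

noncomputable def π (g : G) (x : R) : R := (DirectSum.decompose 𝒜 x g : R)

lemma π_mem (g : G) (x : R) : π 𝒜 g x ∈ 𝒜 g := SetLike.coe_mem _

lemma π_add (g : G) (x y : R) : π 𝒜 g (x + y) = π 𝒜 g x + π 𝒜 g y := by
  simp [π, DirectSum.decompose_add]

lemma π_zero (g : G) : π 𝒜 g 0 = 0 := by simp [π]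

lemma π_sum (g : G) {α : Type*} (s : Finset α) (f : α → R) :
    π 𝒜 g (∑ i ∈ s, f i) = ∑ i ∈ s, π 𝒜 g (f i) := by
  classical
  induction s using Finset.induction_on with
  | empty => simp [π_zero]
  | @insert _ _ h ih => rw [Finset.sum_insert h, Finset.sum_insert h, π_add, ih]

lemma π_of_mem_same {g : G} {x : R} (h : x ∈ 𝒜 g) : π 𝒜 g x = x :=
  DirectSum.decompose_of_mem_same 𝒜 h

lemma π_of_mem_ne {g g' : G} {x : R} (h : x ∈ 𝒜 g) (hne : g ≠ g') : π 𝒜 g' x = 0 :=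
  DirectSum.decompose_of_mem_ne 𝒜 h hne

lemma exists_finset_sum_π (x : R) : ∃ s : Finset G, x = ∑ g ∈ s, π 𝒜 g x := by
  classical
  exact ⟨(DirectSum.decompose 𝒜 x).support, (DirectSum.sum_support_decompose 𝒜 x).symm⟩

variable {𝒜}
variable (hmul : ∀ (g h : G) (a b : R), a ∈ 𝒜 g → b ∈ 𝒜 h → a * b ∈ 𝒜 (g * h))

include hmul

lemma π_mul_left (g h : G) {a : R} (ha : a ∈ 𝒜 g) (r : R) :
    π 𝒜 (g * h) (a * r) = a * π 𝒜 h r := by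
  induction r using DirectSum.Decomposition.inductionOn 𝒜 with
  | zero => simp [π_zero]
  | @homogeneous k m =>
      by_cases hk : k = h
      · subst hk
        rw [π_of_mem_same 𝒜 (hmul _ _ _ _ ha m.2), π_of_mem_same 𝒜 m.2]
      · rw [π_of_mem_ne 𝒜 (hmul _ _ _ _ ha m.2) (by simpa using hk),
          π_of_mem_ne 𝒜 m.2 hk, mul_zero]
  | add x y hx hy => rw [mul_add, π_add, π_add, hx, hy, mul_add]

lemma π_mul_right (g h : G) {a : R} (ha : a ∈ 𝒜 g) (r : R) :
    π 𝒜 (h * g) (r * a) = π 𝒜 h r * a := by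
  induction r using DirectSum.Decomposition.inductionOn 𝒜 with
  | zero => simp [π_zero]
  | @homogeneous k m =>
      by_cases hk : k = h
      · subst hk
        rw [π_of_mem_same 𝒜 (hmul _ _ _ _ m.2 ha), π_of_mem_same 𝒜 m.2]
      · rw [π_of_mem_ne 𝒜 (hmul _ _ _ _ m.2 ha) (by simpa using hk),
          π_of_mem_ne 𝒜 m.2 hk, zero_mul]
  | add x y hx hy => rw [add_mul, π_add, π_add, hx, hy, add_mul]

lemma π_span_mem {S : Set R} (hS : S ⊆ ⋃ g, (𝒜 g : Set R)) {x : R}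
    (hx : x ∈ Submodule.span R S) (h : G) : π 𝒜 h x ∈ Submodule.span R S := by
  induction hx using Submodule.span_induction generalizing h with
  | mem y hy =>
      obtain ⟨_, ⟨g, rfl⟩, hg⟩ := hS hy
      by_cases hgh : g = h
      · subst hgh; rw [π_of_mem_same 𝒜 hg]; exact Submodule.subset_span hy
      · rw [π_of_mem_ne 𝒜 hg hgh]; exact zero_mem _
  | zero => rw [π_zero]; exact zero_mem _
  | add y z _ _ hy hz => rw [π_add]; exact add_mem (hy h) (hz h)
  | smul r y hy ih =>
      obtain ⟨s, hs⟩ := exists_finset_sum_π 𝒜 r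
      have h1 : r • y = ∑ g ∈ s, π 𝒜 g r * y := by
        rw [smul_eq_mul]; conv_lhs => rw [hs]
        rw [Finset.sum_mul]
      rw [h1, π_sum]
      refine Submodule.sum_mem _ fun k _ => ?_
      have h2 : π 𝒜 h (π 𝒜 k r * y) = π 𝒜 k r * π 𝒜 (k⁻¹ * h) y := by
        have := π_mul_left hmul k (k⁻¹ * h) (π_mem 𝒜 k r) y
        rwa [mul_inv_cancel_left] at this
      rw [h2]
      exact Submodule.smul_mem _ _ (ih _)

lemma graded_iff {I : Submodule R R} :
    IsGradedLeftIdeal 𝒜 I ↔ ∀ x ∈ I, ∀ g, π 𝒜 g x ∈ I := by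
  constructor
  · intro hI x hx g
    have hsub : ((I : Set R) ∩ ⋃ g, (𝒜 g : Set R)) ⊆ ⋃ g, (𝒜 g : Set R) :=
      Set.inter_subset_right
    have : x ∈ Submodule.span R ((I : Set R) ∩ ⋃ g, (𝒜 g : Set R)) := hI ▸ hx
    have := π_span_mem hmul hsub this g
    rwa [← hI] at this
  · intro hI
    refine le_antisymm (fun x hx => ?_) ?_
    · obtain ⟨s, hs⟩ := exists_finset_sum_π 𝒜 x
      rw [hs]
      refine Submodule.sum_mem _ fun g _ => Submodule.subset_span ?_
      exact ⟨hI x hx g, Set.mem_iUnion.2 ⟨g, π_mem 𝒜 g x⟩⟩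
    · rw [Submodule.span_le]; exact Set.inter_subset_left


lemma graded_inf {I J : Submodule R R} (hI : IsGradedLeftIdeal 𝒜 I)
    (hJ : IsGradedLeftIdeal 𝒜 J) : IsGradedLeftIdeal 𝒜 (I ⊓ J) := by
  rw [graded_iff hmul] at *
  exact fun x hx g => ⟨hI x hx.1 g, hJ x hx.2 g⟩

lemma graded_top : IsGradedLeftIdeal 𝒜 (⊤ : Submodule R R) :=
  (graded_iff hmul).2 fun x _ g => trivial

lemma graded_bot : IsGradedLeftIdeal 𝒜 (⊥ : Submodule R R) := by
  rw [graded_iff hmul]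
  intro x hx g
  rw [Submodule.mem_bot] at hx
  subst hx
  rw [π_zero]
  exact zero_mem _

lemma graded_span {S : Set R} (hS : S ⊆ ⋃ g, (𝒜 g : Set R)) :
    IsGradedLeftIdeal 𝒜 (Submodule.span R S) :=
  (graded_iff hmul).2 fun x hx g => π_span_mem hmul hS hx g

lemma graded_sSup {𝒮 : Set (Submodule R R)} (h : ∀ I ∈ 𝒮, IsGradedLeftIdeal 𝒜 I) :
    IsGradedLeftIdeal 𝒜 (sSup 𝒮) := by
  refine le_antisymm ?_ ?_
  · refine sSup_le fun I hI => ?_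
    rw [h I hI]
    refine Submodule.span_mono (Set.inter_subset_inter_left _ ?_)
    exact_mod_cast le_sSup hI
  · rw [Submodule.span_le]; exact Set.inter_subset_left

lemma graded_sup {I J : Submodule R R} (hI : IsGradedLeftIdeal 𝒜 I)
    (hJ : IsGradedLeftIdeal 𝒜 J) : IsGradedLeftIdeal 𝒜 (I ⊔ J) := by
  rw [← sSup_pair]
  refine graded_sSup hmul ?_
  intro K hK
  rcases Set.mem_insert_iff.mp hK with rfl | h
  · exact hI
  · rw [Set.mem_singleton_iff] at h; subst h; exact hJ

lemma exists_homog_ne_zero {N : Submodule R R} (hN : IsGradedLeftIdeal 𝒜 N)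
    (h0 : N ≠ ⊥) : ∃ x : R, x ∈ N ∧ (∃ g, x ∈ 𝒜 g) ∧ x ≠ 0 := by
  by_contra hcon
  push_neg at hcon
  apply h0
  rw [hN, eq_bot_iff, Submodule.span_le]
  rintro x ⟨hxN, hxH⟩
  obtain ⟨_, ⟨g, rfl⟩, hg⟩ := hxH
  by_cases hx0 : x = 0
  · simp [hx0]
  · exact absurd hx0 (not_not.2 (hcon x hxN ⟨g, hg⟩))


lemma graded_sSup_min {𝒮 : Set (Submodule R R)} (h𝒮 : ∀ I ∈ 𝒮, IsMinGradedLeftIdeal 𝒜 I) :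
    IsGradedLeftIdeal 𝒜 (sSup 𝒮) :=
  graded_sSup hmul fun I hI => (h𝒮 I hI).1

/-- From graded semisimplicity, every graded left ideal has a graded complement. -/
lemma hasGC_of_ss (hss : sSup {S : Submodule R R | IsMinGradedLeftIdeal 𝒜 S} = ⊤)
    {I : Submodule R R} (hI : IsGradedLeftIdeal 𝒜 I) :
    ∃ K : Submodule R R, IsGradedLeftIdeal 𝒜 K ∧ I ⊓ K = ⊥ ∧ I ⊔ K = ⊤ := by
  set s : Set (Submodule R R) := {K | IsGradedLeftIdeal 𝒜 K ∧ I ⊓ K = ⊥} with hs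
  have hbot : (⊥ : Submodule R R) ∈ s := ⟨graded_bot hmul, inf_bot_eq I⟩
  have hchain : ∀ c ⊆ s, IsChain (· ≤ ·) c → ∀ y ∈ c, ∃ ub ∈ s, ∀ z ∈ c, z ≤ ub := by
    intro c hcs hc y hy
    refine ⟨sSup c, ⟨graded_sSup hmul fun I hI => (hcs hI).1, ?_⟩, fun z hz => le_sSup hz⟩
    rw [eq_bot_iff]
    intro x hx
    rw [Submodule.mem_inf] at hx
    obtain ⟨hxI, hxS⟩ := hx
    obtain ⟨K', hK'c, hxK'⟩ := (Submodule.mem_sSup_of_directed ⟨y, hy⟩ hc.directedOn).1 hxS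
    have hxIK : x ∈ I ⊓ K' := Submodule.mem_inf.2 ⟨hxI, hxK'⟩
    rw [(hcs hK'c).2, Submodule.mem_bot] at hxIK
    rw [Submodule.mem_bot]
    exact hxIK
  obtain ⟨K, -, ⟨hKgr, hKinf⟩, hKmax⟩ := zorn_le_nonempty₀ s hchain ⊥ hbot
  · refine ⟨K, hKgr, hKinf, ?_⟩
    have hmin : ∀ S : Submodule R R, IsMinGradedLeftIdeal 𝒜 S → S ≤ I ⊔ K := by
      intro S hS
      have hTgr : IsGradedLeftIdeal 𝒜 (S ⊓ (I ⊔ K)) :=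
        graded_inf hmul hS.1 (graded_sup hmul hI hKgr)
      rcases hS.2.2 _ inf_le_left hTgr with hT | hT
      · -- S ⊓ (I ⊔ K) = ⊥ ; then K ⊔ S still intersects I trivially
        have hnew : I ⊓ (K ⊔ S) = ⊥ := by
          rw [eq_bot_iff]
          intro x hx
          rw [Submodule.mem_inf] at hx
          obtain ⟨hxI, hxKS⟩ := hx
          rw [Submodule.mem_sup] at hxKS
          obtain ⟨k, hk, t, ht, hxkt⟩ := hxKS
          have ht' : t ∈ S ⊓ (I ⊔ K) := by
            refine ⟨ht, ?_⟩
            have : t = x - k := eq_sub_of_add_eq' hxkt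
            rw [this]
            exact sub_mem (Submodule.mem_sup_left hxI) (Submodule.mem_sup_right hk)
          rw [hT, Submodule.mem_bot] at ht'
          subst ht'
          have hxk : x = k := by rw [← hxkt, add_zero]
          subst hxk
          have : x ∈ I ⊓ K := ⟨hxI, hk⟩
          rwa [hKinf, Submodule.mem_bot] at this
        have hmem : K ⊔ S ∈ s := ⟨graded_sup hmul hKgr hS.1, hnew⟩
        have := hKmax hmem le_sup_left
        exact le_trans (le_trans le_sup_right this) le_sup_right
      · rw [← hT]; exact inf_le_right
    rw [eq_top_iff, ← hss]
    exact sSup_le fun S hS => hmin S hS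

/-- Every nonzero graded ideal contains a minimal graded ideal, given graded complements. -/
lemma exists_min
    (hGC : ∀ I : Submodule R R, IsGradedLeftIdeal 𝒜 I →
      ∃ K : Submodule R R, IsGradedLeftIdeal 𝒜 K ∧ I ⊓ K = ⊥ ∧ I ⊔ K = ⊤)
    {N : Submodule R R} (hN : IsGradedLeftIdeal 𝒜 N) (h0 : N ≠ ⊥) :
    ∃ S : Submodule R R, S ≤ N ∧ IsMinGradedLeftIdeal 𝒜 S := by
  obtain ⟨x, hxN, ⟨g, hxg⟩, hx0⟩ := exists_homog_ne_zero hmul hN h0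
  set P : Submodule R R := Submodule.span R {x} with hP
  have hPH : ({x} : Set R) ⊆ ⋃ g, (𝒜 g : Set R) := by
    rintro y rfl
    exact Set.mem_iUnion.2 ⟨g, hxg⟩
  have hPgr : IsGradedLeftIdeal 𝒜 P := graded_span hmul hPH
  have hPN : P ≤ N := by
    rw [hP, Submodule.span_le, Set.singleton_subset_iff]; exact hxN
  have hxP : x ∈ P := Submodule.mem_span_singleton_self x
  set s : Set (Submodule R R) := {K | IsGradedLeftIdeal 𝒜 K ∧ K ≤ P ∧ x ∉ K} with hs
  have hbot : (⊥ : Submodule R R) ∈ s := by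
    refine ⟨graded_bot hmul, bot_le, ?_⟩
    rw [Submodule.mem_bot]; exact hx0
  have hchain : ∀ c ⊆ s, IsChain (· ≤ ·) c → ∀ y ∈ c, ∃ ub ∈ s, ∀ z ∈ c, z ≤ ub := by
    intro c hcs hc y hy
    refine ⟨sSup c, ⟨graded_sSup hmul fun I hI => (hcs hI).1, sSup_le fun I hI => (hcs hI).2.1, ?_⟩,
      fun z hz => le_sSup hz⟩
    intro hxs
    obtain ⟨K', hK'c, hxK'⟩ := (Submodule.mem_sSup_of_directed ⟨y, hy⟩ hc.directedOn).1 hxs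
    exact (hcs hK'c).2.2 hxK'
  obtain ⟨K, -, ⟨hKgr, hKP, hKx⟩, hKmax⟩ := zorn_le_nonempty₀ s hchain ⊥ hbot
  · obtain ⟨C, hCgr, hKC, hKCtop⟩ := hGC K hKgr
    set S : Submodule R R := P ⊓ C with hS
    have hSgr : IsGradedLeftIdeal 𝒜 S := graded_inf hmul hPgr hCgr
    have hKS : K ⊔ S = P := by
      rw [hS, sup_comm, inf_sup_assoc_of_le _ hKP, sup_comm C K, hKCtop, inf_top_eq]
    have hKSbot : K ⊓ S = ⊥ := by
      rw [eq_bot_iff, ← hKC]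
      exact inf_le_inf_left _ inf_le_right
    have hSne : S ≠ ⊥ := by
      intro h
      rw [h, sup_bot_eq] at hKS
      exact hKx (hKS ▸ hxP)
    refine ⟨S, le_trans inf_le_left hPN, hSgr, hSne, ?_⟩
    intro T hTS hTgr
    by_cases hT0 : T = ⊥
    · exact Or.inl hT0
    right
    have hxKT : x ∈ K ⊔ T := by
      by_contra hxKT
      have hmem : K ⊔ T ∈ s :=
        ⟨graded_sup hmul hKgr hTgr, sup_le hKP (le_trans hTS (le_trans inf_le_left le_rfl)), hxKT⟩
      have hle := hKmax hmem le_sup_left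
      have hTbot : T ≤ ⊥ := by
        rw [← hKSbot]
        exact le_inf (le_trans le_sup_right hle) hTS
      exact hT0 (le_bot_iff.1 hTbot)
    have hKTP : K ⊔ T = P := by
      refine le_antisymm (sup_le hKP (le_trans hTS inf_le_left)) ?_
      rw [hP, Submodule.span_le, Set.singleton_subset_iff]
      exact hxKT
    have : (T ⊔ K) ⊓ S = T ⊔ K ⊓ S := sup_inf_assoc_of_le _ hTS
    rw [hKSbot, sup_bot_eq, sup_comm T K, hKTP] at this
    rw [← this, inf_eq_right.2 (le_trans inf_le_left le_rfl : S ≤ P)]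

/-- Graded semisimple implies graded von Neumann regular. -/
lemma regular_of_ss (hss : sSup {S : Submodule R R | IsMinGradedLeftIdeal 𝒜 S} = ⊤)
    (g : G) (a : R) (ha : a ∈ 𝒜 g) : ∃ b : R, a = a * b * a := by
  by_cases ha0 : a = 0
  · exact ⟨0, by simp [ha0]⟩
  have hIH : ({a} : Set R) ⊆ ⋃ g, (𝒜 g : Set R) := by
    rintro y rfl; exact Set.mem_iUnion.2 ⟨g, ha⟩
  have hIgr : IsGradedLeftIdeal 𝒜 (Submodule.span R {a}) := graded_span hmul hIH
  obtain ⟨K, hKgr, hKinf, hKtop⟩ := hasGC_of_ss hmul hss hIgr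
  have h1 : (1 : R) ∈ Submodule.span R {a} ⊔ K := by rw [hKtop]; trivial
  rw [Submodule.mem_sup] at h1
  obtain ⟨y, hy, k, hk, hyk⟩ := h1
  rw [Submodule.mem_span_singleton] at hy
  obtain ⟨b, hb⟩ := hy
  refine ⟨b, ?_⟩
  have key : a - a * b * a ∈ Submodule.span R {a} ⊓ K := by
    constructor
    · refine sub_mem (Submodule.mem_span_singleton_self a) ?_
      rw [Submodule.mem_span_singleton]
      exact ⟨a * b, by rw [smul_eq_mul, mul_assoc]⟩
    · rw [smul_eq_mul] at hb
      have h3 : a * b * a + a * k = a := by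
        calc a * b * a + a * k = a * (b * a) + a * k := by rw [mul_assoc]
          _ = a * y + a * k := by rw [hb]
          _ = a * (y + k) := by rw [mul_add]
          _ = a := by rw [hyk, mul_one]
      have h4 : a - a * b * a = a * k := by
        rw [sub_eq_iff_eq_add]
        conv_lhs => rw [← h3]
        rw [add_comm]
      rw [h4]
      exact Submodule.smul_mem K a hk
  rw [hKinf, Submodule.mem_bot, sub_eq_zero] at key
  exact key


omit hmul in
lemma chain_mono {m : ℕ} {c : ℕ → Submodule R R}
    (hstrict : ∀ i, i < m → c i < c (i + 1)) :
    ∀ i j, i ≤ j → j ≤ m → c i ≤ c j := by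
  intro i j hij hjm
  induction j, hij using Nat.le_induction with
  | base => exact le_rfl
  | succ j hij ih =>
      exact le_trans (ih (by omega)) (le_of_lt (hstrict j (by omega)))

lemma chain_card (U : Finset (Submodule R R))
    (hU : ∀ S ∈ U, IsMinGradedLeftIdeal 𝒜 S) :
    ∀ (m : ℕ) (c : ℕ → Submodule R R), (∀ i, IsGradedLeftIdeal 𝒜 (c i)) →
      (∀ i, i < m → c i < c (i + 1)) → c m ≤ sSup (↑U : Set (Submodule R R)) →
      m ≤ U.card := by
  classical
  induction U using Finset.induction_on with
  | empty =>
      intro m c _ hstrict hle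
      by_contra hcon
      push_neg at hcon
      have h1 : 1 ≤ m := by omega
      have h0 : c 0 < c 1 := hstrict 0 (by omega)
      have h2 : c 1 ≤ c m := chain_mono hstrict 1 m h1 le_rfl
      rw [Finset.coe_empty, sSup_empty] at hle
      have h3 : c 0 < ⊥ := lt_of_lt_of_le h0 (le_trans h2 hle)
      exact absurd bot_le (not_le_of_gt h3)
  | @insert S U' hSU ih =>
      intro m c hgr hstrict hle
      have hU'min : ∀ T ∈ U', IsMinGradedLeftIdeal 𝒜 T :=
        fun T hT => hU T (Finset.mem_insert_of_mem hT)
      have hSmin : IsMinGradedLeftIdeal 𝒜 S := hU S (Finset.mem_insert_self S U')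
      set W : Submodule R R := sSup (↑U' : Set (Submodule R R)) with hWdef
      have hWgr : IsGradedLeftIdeal 𝒜 W :=
        graded_sSup hmul fun I hI => (hU'min I (Finset.mem_coe.1 hI)).1
      rw [Finset.coe_insert, sSup_insert] at hle
      -- hle : c m ≤ S ⊔ W
      have hbnd : ∀ i, i ≤ m → c i ⊔ W ≤ S ⊔ W := fun i him =>
        sup_le (le_trans (chain_mono hstrict i m him le_rfl) hle) le_sup_right
      have hint : ∀ i, i ≤ m → c i ⊔ W = W ∨ c i ⊔ W = S ⊔ W := by
        intro i him
        have hegr : IsGradedLeftIdeal 𝒜 (c i ⊔ W) := graded_sup hmul (hgr i) hWgr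
        have hxgr : IsGradedLeftIdeal 𝒜 (S ⊓ (c i ⊔ W)) := graded_inf hmul hSmin.1 hegr
        have hmod : (W ⊔ S) ⊓ (c i ⊔ W) = W ⊔ S ⊓ (c i ⊔ W) :=
          sup_inf_assoc_of_le S le_sup_right
        have hee : (W ⊔ S) ⊓ (c i ⊔ W) = c i ⊔ W :=
          inf_eq_right.2 (by rw [sup_comm W S]; exact hbnd i him)
        rcases hSmin.2.2 _ inf_le_left hxgr with hx | hx
        · left
          rw [← hee, hmod, hx, sup_bot_eq]
        · right
          rw [← hee, hmod, hx, sup_comm W S]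
      have hstep : ∀ k, k < m → c k ⊔ W = c (k+1) ⊔ W → c k ⊓ W < c (k+1) ⊓ W := by
        intro k hk he
        refine lt_of_le_of_ne (inf_le_inf_right _ (le_of_lt (hstrict k hk))) ?_
        intro hd
        exact (hstrict k hk).ne
          (eq_of_le_of_inf_le_of_sup_le (le_of_lt (hstrict k hk))
            (le_of_eq hd.symm) (le_of_eq he.symm))
      by_cases hex : ∃ i₀, i₀ < m ∧ c i₀ ⊔ W < c (i₀+1) ⊔ W
      · obtain ⟨i₀, hi₀m, hi₀lt⟩ := hex
        have heiW : c i₀ ⊔ W = W := by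
          rcases hint i₀ (le_of_lt hi₀m) with h | h
          · exact h
          · exact absurd (hbnd (i₀+1) hi₀m) (not_le_of_gt (h ▸ hi₀lt))
        have heiV : c (i₀+1) ⊔ W = S ⊔ W := by
          rcases hint (i₀+1) hi₀m with h | h
          · exact absurd (h ▸ hi₀lt) (not_lt_of_ge le_sup_right)
          · exact h
        have huniq : ∀ j, j < m → j ≠ i₀ → c j ⊔ W = c (j+1) ⊔ W := by
          intro j hj hne
          rcases lt_or_gt_of_ne hne with hlt | hgt
          · have h1 : c (j+1) ⊔ W ≤ c i₀ ⊔ W :=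
              sup_le_sup_right (chain_mono hstrict (j+1) i₀ hlt (le_of_lt hi₀m)) W
            rw [heiW] at h1
            have h2 : c j ⊔ W ≤ c (j+1) ⊔ W := sup_le_sup_right (le_of_lt (hstrict j hj)) W
            have e2 : c (j+1) ⊔ W = W := le_antisymm h1 le_sup_right
            have e1 : c j ⊔ W = W := le_antisymm (h2.trans (le_of_eq e2)) le_sup_right
            rw [e1, e2]
          · have h1 : S ⊔ W ≤ c j ⊔ W := by
              rw [← heiV]
              exact sup_le_sup_right (chain_mono hstrict (i₀+1) j hgt (le_of_lt hj)) W
            have h4 : c j ⊔ W ≤ c (j+1) ⊔ W := sup_le_sup_right (le_of_lt (hstrict j hj)) W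
            have e1 : c j ⊔ W = S ⊔ W := le_antisymm (hbnd j (le_of_lt hj)) h1
            have e2 : c (j+1) ⊔ W = S ⊔ W := le_antisymm (hbnd (j+1) hj) (le_trans h1 h4)
            rw [e1, e2]
        set d : ℕ → Submodule R R := fun j => if j ≤ i₀ then c j ⊓ W else c (j+1) ⊓ W with hd
        have hdgr : ∀ j, IsGradedLeftIdeal 𝒜 (d j) := by
          intro j
          rw [hd]
          dsimp only
          split <;> exact graded_inf hmul (hgr _) hWgr
        have hdstrict : ∀ j, j < m - 1 → d j < d (j+1) := by
          intro j hj
          have hjm : j < m := by omega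
          rcases lt_trichotomy j i₀ with hlt | heq | hgt
          · have e1 : d j = c j ⊓ W := if_pos (by omega)
            have e2 : d (j+1) = c (j+1) ⊓ W := if_pos (by omega)
            rw [e1, e2]
            exact hstep j hjm (huniq j hjm (by omega))
          · subst heq
            have e1 : d j = c j ⊓ W := if_pos le_rfl
            have e2 : d (j+1) = c (j+2) ⊓ W := if_neg (by omega)
            rw [e1, e2]
            have hs1 : c (j+1) ⊓ W < c (j+2) ⊓ W :=
              hstep (j+1) (by omega) (huniq (j+1) (by omega) (by omega))
            exact lt_of_le_of_lt (inf_le_inf_right W (le_of_lt (hstrict j hjm))) hs1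
          · have e1 : d j = c (j+1) ⊓ W := if_neg (by omega)
            have e2 : d (j+1) = c (j+2) ⊓ W := if_neg (by omega)
            rw [e1, e2]
            exact hstep (j+1) (by omega) (huniq (j+1) (by omega) (by omega))
        have hdend : d (m-1) ≤ sSup (↑U' : Set (Submodule R R)) := by
          rw [hd]
          dsimp only
          split <;> exact inf_le_right
        have hfin := ih hU'min (m-1) d hdgr hdstrict hdend
        rw [Finset.card_insert_of_notMem hSU]
        omega
      · push_neg at hex
        have hall : ∀ k, k < m → c k ⊓ W < c (k+1) ⊓ W := by
          intro k hk
          refine hstep k hk ?_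
          rcases lt_or_eq_of_le (sup_le_sup_right (le_of_lt (hstrict k hk)) W) with h | h
          · exact absurd h (hex k hk)
          · exact h
        have hfin := ih hU'min m (fun i => c i ⊓ W) (fun i => graded_inf hmul (hgr i) hWgr)
          hall inf_le_right
        exact le_trans hfin (Finset.card_le_card (Finset.subset_insert S U'))

lemma noetherian_of_ss (hss : sSup {S : Submodule R R | IsMinGradedLeftIdeal 𝒜 S} = ⊤) :
    ∀ f : ℕ → Submodule R R, (∀ n, IsGradedLeftIdeal 𝒜 (f n)) → Monotone f →
      ∃ n, ∀ m', n ≤ m' → f m' = f n := by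
  classical
  have htopfg : (⊤ : Submodule R R).FG := by
    refine ⟨{1}, ?_⟩
    rw [eq_top_iff]
    rintro x -
    rw [Finset.coe_singleton]
    exact Submodule.mem_span_singleton.2 ⟨x, by rw [smul_eq_mul, mul_one]⟩
  have hcomp := (CompleteLattice.isCompactElement_iff_exists_le_sSup_of_le_sSup _ _).1 ((Submodule.fg_iff_compact _).1 htopfg)
  obtain ⟨U, hUsub, hUtop⟩ := hcomp _ (le_of_eq hss.symm)
  intro f hgr hmono
  by_contra hcon
  push_neg at hcon
  choose nxt hnle hnne using hcon
  set F : ℕ → ℕ := fun k => Nat.rec 0 (fun _ x => nxt x) k with hF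
  have hstrict : ∀ k, f (F k) < f (F (k+1)) := by
    intro k
    have : F (k+1) = nxt (F k) := rfl
    rw [this]
    exact lt_of_le_of_ne (hmono (hnle (F k))) (Ne.symm (hnne (F k)))
  have hend : f (F (U.card + 1)) ≤ sSup (↑U : Set (Submodule R R)) := by
    calc f (F (U.card + 1)) ≤ ⊤ := le_top
      _ ≤ U.sup id := hUtop
      _ = sSup ↑U := Finset.sup_id_eq_sSup U
  have := chain_card hmul U (fun S hS => hUsub (Finset.mem_coe.2 hS)) (U.card + 1)
    (fun k => f (F k)) (fun i => hgr _) (fun i _ => hstrict i) hend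
  omega


lemma exists_finset_span
    (hno : ∀ f : ℕ → Submodule R R, (∀ n, IsGradedLeftIdeal 𝒜 (f n)) → Monotone f →
      ∃ n, ∀ m, n ≤ m → f m = f n)
    {I : Submodule R R} (hI : IsGradedLeftIdeal 𝒜 I) :
    ∃ s : Finset R, (↑s : Set R) ⊆ (I : Set R) ∩ (⋃ g, (𝒜 g : Set R)) ∧
      I = Submodule.span R (↑s : Set R) := by
  classical
  by_contra hcon
  push_neg at hcon
  set X : Set R := (I : Set R) ∩ (⋃ g, (𝒜 g : Set R)) with hX
  have hpick : ∀ s : Finset R, (↑s : Set R) ⊆ X →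
      ∃ x, x ∈ X ∧ x ∉ Submodule.span R (↑s : Set R) := by
    intro s hs
    by_contra hx
    push_neg at hx
    refine hcon s hs (le_antisymm ?_ ?_)
    · conv_lhs => rw [hI]
      rw [Submodule.span_le]
      intro y hy
      exact hx y hy
    · rw [Submodule.span_le]
      exact fun y hy => (hs hy).1
  choose pick hpmem hpnot using hpick
  set step : {s : Finset R // ↑s ⊆ X} → {s : Finset R // ↑s ⊆ X} :=
    fun s => ⟨insert (pick s.1 s.2) s.1, by
      rw [Finset.coe_insert]
      exact Set.insert_subset (hpmem s.1 s.2) s.2⟩ with hstep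
  set F : ℕ → {s : Finset R // ↑s ⊆ X} := fun k => step^[k] ⟨∅, by simp⟩ with hF
  have hFs : ∀ k, F (k+1) = step (F k) := by
    intro k
    rw [hF]
    exact Function.iterate_succ_apply' step k _
  set c : ℕ → Submodule R R := fun k => Submodule.span R ((F k).1 : Set R) with hc
  have hcgr : ∀ k, IsGradedLeftIdeal 𝒜 (c k) :=
    fun k => graded_span hmul ((F k).2.trans Set.inter_subset_right)
  have hcmono : Monotone c := by
    refine monotone_nat_of_le_succ fun k => ?_
    rw [hc]
    dsimp only
    rw [hFs k]
    refine Submodule.span_mono ?_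
    rw [hstep]
    dsimp only
    rw [Finset.coe_insert]
    exact Set.subset_insert _ _
  obtain ⟨n, hn⟩ := hno c hcgr hcmono
  have hxin : pick (F n).1 (F n).2 ∈ c (n+1) := by
    rw [hc]
    dsimp only
    rw [hFs n]
    refine Submodule.subset_span ?_
    rw [hstep]
    dsimp only
    rw [Finset.coe_insert]
    exact Set.mem_insert _ _
  rw [hn (n+1) (by omega)] at hxin
  exact hpnot (F n).1 (F n).2 hxin

lemma exists_idem (hreg : ∀ (g : G) (a : R), a ∈ 𝒜 g → ∃ b : R, a = a * b * a)
    {g : G} {a : R} (ha : a ∈ 𝒜 g) :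
    ∃ f : R, (∃ b', f = b' * a) ∧ f ∈ 𝒜 1 ∧ f * f = f ∧
      Submodule.span R {a} = Submodule.span R {f} := by
  obtain ⟨b, hb⟩ := hreg g a ha
  set b' : R := π 𝒜 g⁻¹ b with hb'
  have hb'mem : b' ∈ 𝒜 g⁻¹ := π_mem 𝒜 g⁻¹ b
  have hab : a = a * b' * a := by
    have h1 : π 𝒜 g a = a := π_of_mem_same 𝒜 ha
    have h2 : π 𝒜 g (a * b * a) = π 𝒜 1 (a * b) * a := by
      have := π_mul_right hmul g 1 ha (a * b)
      rwa [one_mul] at this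
    have h3 : π 𝒜 1 (a * b) = a * π 𝒜 g⁻¹ b := by
      have := π_mul_left hmul g g⁻¹ ha b
      rwa [mul_inv_cancel] at this
    calc a = π 𝒜 g a := h1.symm
      _ = π 𝒜 g (a * b * a) := by rw [← hb]
      _ = π 𝒜 1 (a * b) * a := h2
      _ = a * b' * a := by rw [h3]
  refine ⟨b' * a, ⟨b', rfl⟩, ?_, ?_, ?_⟩
  · have := hmul g⁻¹ g b' a hb'mem ha
    rwa [inv_mul_cancel] at this
  · calc b' * a * (b' * a) = b' * (a * (b' * a)) := by rw [mul_assoc]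
      _ = b' * (a * b' * a) := by rw [← mul_assoc a b' a]
      _ = b' * a := by rw [← hab]
  · refine le_antisymm ?_ ?_
    · rw [Submodule.span_le, Set.singleton_subset_iff, SetLike.mem_coe,
        Submodule.mem_span_singleton]
      exact ⟨a, by rw [smul_eq_mul, ← mul_assoc, ← hab]⟩
    · rw [Submodule.span_le, Set.singleton_subset_iff, SetLike.mem_coe,
        Submodule.mem_span_singleton]
      exact ⟨b', by rw [smul_eq_mul]⟩

lemma combine_idem {e f : R} (he1 : e ∈ 𝒜 1) (hf1 : f ∈ 𝒜 1)
    (hee : e * e = e) (hff : f * f = f) (hfe : f * e = 0) :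
    ∃ u : R, u ∈ 𝒜 1 ∧ u * u = u ∧
      Submodule.span R {e} ⊔ Submodule.span R {f} = Submodule.span R {u} := by
  set u : R := e + f - e * f with hu
  have hu1 : u ∈ 𝒜 1 := by
    have hef : e * f ∈ 𝒜 1 := by
      have := hmul 1 1 e f he1 hf1
      rwa [one_mul] at this
    exact sub_mem (add_mem he1 hf1) hef
  have heu : e * u = e := by
    rw [hu, mul_sub, mul_add, hee, ← mul_assoc, hee, add_sub_cancel_right]
  have hfu : f * u = f := by
    rw [hu, mul_sub, mul_add, hff, ← mul_assoc, hfe, zero_mul, sub_zero, zero_add]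
  have huu : u * u = u := by
    conv_lhs => rw [hu]
    rw [sub_mul, add_mul, heu, hfu, mul_assoc, hfu, ← hu]
  refine ⟨u, hu1, huu, le_antisymm ?_ ?_⟩
  · refine sup_le ?_ ?_ <;>
      rw [Submodule.span_le, Set.singleton_subset_iff, SetLike.mem_coe,
        Submodule.mem_span_singleton]
    · exact ⟨e, by rw [smul_eq_mul, heu]⟩
    · exact ⟨f, by rw [smul_eq_mul, hfu]⟩
  · rw [Submodule.span_le, Set.singleton_subset_iff, SetLike.mem_coe, hu]
    refine sub_mem (add_mem ?_ ?_) ?_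
    · exact Submodule.mem_sup_left (Submodule.mem_span_singleton_self e)
    · exact Submodule.mem_sup_right (Submodule.mem_span_singleton_self f)
    · exact Submodule.mem_sup_right (Submodule.mem_span_singleton.2 ⟨e, by rw [smul_eq_mul]⟩)

lemma span_finset_idem (hreg : ∀ (g : G) (a : R), a ∈ 𝒜 g → ∃ b : R, a = a * b * a)
    (s : Finset R) (hsub : (↑s : Set R) ⊆ (⋃ g, (𝒜 g : Set R))) :
    ∃ e : R, e ∈ 𝒜 1 ∧ e * e = e ∧
      Submodule.span R (↑s : Set R) = Submodule.span R {e} := by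
  classical
  induction s using Finset.induction_on with
  | empty =>
      exact ⟨0, zero_mem _, by rw [mul_zero],
        by rw [Finset.coe_empty, Submodule.span_empty, Submodule.span_zero_singleton]⟩
  | @insert a s' has ih =>
      rw [Finset.coe_insert] at hsub ⊢
      obtain ⟨e, he1, hee, hspan⟩ := ih (fun x hx => hsub (Set.mem_insert_of_mem a hx))
      obtain ⟨_, ⟨g, rfl⟩, hag⟩ := hsub (Set.mem_insert a ↑s')
      set a' : R := a - a * e with ha'
      have hae : a * e ∈ 𝒜 g := by
        have := hmul g 1 a e hag he1
        rwa [mul_one] at this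
      have ha'g : a' ∈ 𝒜 g := sub_mem hag hae
      have ha'e : a' * e = 0 := by
        rw [ha', sub_mul, mul_assoc, hee, sub_self]
      obtain ⟨f, ⟨b', hfb⟩, hf1, hff, hfspan⟩ := exists_idem hmul hreg ha'g
      have hfe : f * e = 0 := by rw [hfb, mul_assoc, ha'e, mul_zero]
      obtain ⟨u, hu1, huu, huspan⟩ := combine_idem hmul he1 hf1 hee hff hfe
      refine ⟨u, hu1, huu, ?_⟩
      rw [Set.insert_eq, Submodule.span_union, hspan]
      have hsw : Submodule.span R {a} ⊔ Submodule.span R {e}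
          = Submodule.span R {a'} ⊔ Submodule.span R {e} := by
        refine le_antisymm ?_ ?_
        · refine sup_le ?_ le_sup_right
          rw [Submodule.span_le, Set.singleton_subset_iff, SetLike.mem_coe]
          have hdec : a = a' + a * e := by rw [ha', sub_add_cancel]
          rw [hdec]
          exact add_mem (Submodule.mem_sup_left (Submodule.mem_span_singleton_self a'))
            (Submodule.mem_sup_right (Submodule.mem_span_singleton.2 ⟨a, by rw [smul_eq_mul]⟩))
        · refine sup_le ?_ le_sup_right
          rw [Submodule.span_le, Set.singleton_subset_iff, SetLike.mem_coe, ha']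
          exact sub_mem (Submodule.mem_sup_left (Submodule.mem_span_singleton_self a))
            (Submodule.mem_sup_right (Submodule.mem_span_singleton.2 ⟨a, by rw [smul_eq_mul]⟩))
      rw [hsw, hfspan, sup_comm, huspan]

lemma hasGC_of_noeth_reg (h1R : (1:R) ∈ 𝒜 1)
    (hno : ∀ f : ℕ → Submodule R R, (∀ n, IsGradedLeftIdeal 𝒜 (f n)) → Monotone f →
      ∃ n, ∀ m, n ≤ m → f m = f n)
    (hreg : ∀ (g : G) (a : R), a ∈ 𝒜 g → ∃ b : R, a = a * b * a)
    {I : Submodule R R} (hI : IsGradedLeftIdeal 𝒜 I) :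
    ∃ K : Submodule R R, IsGradedLeftIdeal 𝒜 K ∧ I ⊓ K = ⊥ ∧ I ⊔ K = ⊤ := by
  obtain ⟨s, hssub, hsspan⟩ := exists_finset_span hmul hno hI
  obtain ⟨e, he1, hee, hespan⟩ := span_finset_idem hmul hreg s (hssub.trans Set.inter_subset_right)
  have hIe : I = Submodule.span R {e} := hsspan.trans hespan
  have h1e : (1:R) - e ∈ 𝒜 1 := sub_mem h1R he1
  refine ⟨Submodule.span R {1 - e}, graded_span hmul ?_, ?_, ?_⟩
  · rw [Set.singleton_subset_iff]
    exact Set.mem_iUnion.2 ⟨1, h1e⟩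
  · rw [eq_bot_iff]
    intro x hx
    rw [Submodule.mem_inf, hIe] at hx
    obtain ⟨hx1, hx2⟩ := hx
    rw [Submodule.mem_span_singleton] at hx1 hx2
    obtain ⟨r, hr⟩ := hx1
    obtain ⟨t, ht⟩ := hx2
    rw [smul_eq_mul] at hr ht
    have hxe : x * e = x := by rw [← hr, mul_assoc, hee]
    have hxe0 : x * e = 0 := by
      rw [← ht, mul_assoc, sub_mul, one_mul, hee, sub_self, mul_zero]
    rw [Submodule.mem_bot, ← hxe]
    exact hxe0
  · rw [eq_top_iff]
    intro x _
    rw [Submodule.mem_sup]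
    refine ⟨x * e, ?_, x * (1 - e), ?_, ?_⟩
    · rw [hIe, Submodule.mem_span_singleton]
      exact ⟨x, by rw [smul_eq_mul]⟩
    · rw [Submodule.mem_span_singleton]
      exact ⟨x, by rw [smul_eq_mul]⟩
    · rw [← mul_add, add_sub_cancel, mul_one]

lemma ss_of_noeth_reg (h1R : (1:R) ∈ 𝒜 1)
    (hno : ∀ f : ℕ → Submodule R R, (∀ n, IsGradedLeftIdeal 𝒜 (f n)) → Monotone f →
      ∃ n, ∀ m, n ≤ m → f m = f n)
    (hreg : ∀ (g : G) (a : R), a ∈ 𝒜 g → ∃ b : R, a = a * b * a) :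
    sSup {S : Submodule R R | IsMinGradedLeftIdeal 𝒜 S} = ⊤ := by
  set M : Submodule R R := sSup {S : Submodule R R | IsMinGradedLeftIdeal 𝒜 S} with hM
  have hMgr : IsGradedLeftIdeal 𝒜 M := graded_sSup hmul fun I hI => hI.1
  obtain ⟨K, hKgr, hKinf, hKtop⟩ := hasGC_of_noeth_reg hmul h1R hno hreg hMgr
  by_cases hK : K = ⊥
  · rw [hK, sup_bot_eq] at hKtop
    exact hKtop
  · exfalso
    obtain ⟨S, hSK, hSmin⟩ := exists_min hmul (fun I hI => hasGC_of_noeth_reg hmul h1R hno hreg hI)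
      hKgr hK
    have hSM : S ≤ M := le_sSup hSmin
    have hSbot : S ≤ ⊥ := by
      rw [← hKinf]
      exact le_inf hSM hSK
    exact hSmin.2.1 (le_bot_iff.1 hSbot)

end Machinery
end GradedSS

/-- a graded ring is graded semisimple iff it is graded left
Noetherian and graded von Neumann regular. -/
theorem graded_semisimple_iff_noetherian_and_regular
    (𝒜 : G → AddSubgroup R) (h𝒜 : IsGRing 𝒜) :
    GrSemisimple 𝒜 ↔ GrLeftNoetherian 𝒜 ∧ GrVNRegular 𝒜 := by
  letI : DirectSum.Decomposition 𝒜 := h𝒜.2.2.chooseDecomposition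
  have hmul := h𝒜.2.1
  constructor
  · intro hss
    have hss' : sSup {S : Submodule R R | IsMinGradedLeftIdeal 𝒜 S} = ⊤ := hss
    exact ⟨GradedSS.noetherian_of_ss hmul hss',
      fun g a ha => GradedSS.regular_of_ss hmul hss' g a ha⟩
  · rintro ⟨hno, hreg⟩
    exact GradedSS.ss_of_noeth_reg hmul h𝒜.1 hno hreg
end
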